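/- arXiv:1806.10559 — 6 statements merged into one kernel-verified Lean document; each statement's English description precedes it below -/
import Mathlib

section
/- Let d ∈ ℕ and let (A, C) be a random element of ℝ^{d×d} × ℝ^d on a probability space. Assume: (i) A is invertible almost surely; (ii) for every x ∈ ℝ^d, P(Ax + C = x) < 1; (iii) there exists a d-dimensional random vector X, independent of (A, C), whose law equals the law of AX + C, and any d-dimensional random vector X′ independent of (A, C) whose law equals the law of AX′ + C has the same law as X. Then the law of X has no atoms, and it is of pure type: it is either absolutely continuous or singular with respect to d-dimensional Lebesgue measure. -/
open MeasureTheory ProbabilityTheory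
open scoped ENNReal

/-- Bridging lemma: the explicit sum form equals `Matrix.mulVec`. -/
private lemma sfp_mulVec_eq {d : ℕ} (a : Fin d → Fin d → ℝ) (y : Fin d → ℝ) :
    (fun i => ∑ j, a i j * y j) = (Matrix.of a).mulVec y := by
  funext i; simp [Matrix.mulVec, dotProduct]

private lemma sfp_cancel_left {d : ℕ} (a : Matrix (Fin d) (Fin d) ℝ) (ha : a.det ≠ 0)
    (u : Fin d → ℝ) : a.mulVec (a⁻¹.mulVec u) = u := by
  rw [Matrix.mulVec_mulVec, Matrix.mul_nonsing_inv a (isUnit_iff_ne_zero.mpr ha),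
    Matrix.one_mulVec]

private lemma sfp_cancel_right {d : ℕ} (a : Matrix (Fin d) (Fin d) ℝ) (ha : a.det ≠ 0)
    (u : Fin d → ℝ) : a⁻¹.mulVec (a.mulVec u) = u := by
  rw [Matrix.mulVec_mulVec, Matrix.nonsing_inv_mul a (isUnit_iff_ne_zero.mpr ha),
    Matrix.one_mulVec]

/-- For an invertible matrix, the solution set of the affine equation is a singleton. -/
private lemma sfp_singleton_preimage {d : ℕ} (a : Matrix (Fin d) (Fin d) ℝ) (ha : a.det ≠ 0)
    (c x : Fin d → ℝ) : {y | a.mulVec y + c = x} = {a⁻¹.mulVec (x - c)} := by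
  ext y
  simp only [Set.mem_setOf_eq, Set.mem_singleton_iff]
  constructor
  · rintro h
    have : a.mulVec y = x - c := by rw [← h]; abel
    rw [← this, sfp_cancel_right a ha]
  · rintro rfl
    rw [sfp_cancel_left a ha]; abel

/-- Barycenter lemma: if the affine inverse maps a finite set into itself, the barycenter is
a fixed point of the affine map. -/
private lemma sfp_barycenter {d : ℕ} (a : Matrix (Fin d) (Fin d) ℝ) (ha : a.det ≠ 0)
    (c : Fin d → ℝ) (S : Finset (Fin d → ℝ)) (hne : S.Nonempty)
    (hmap : ∀ x ∈ S, a⁻¹.mulVec (x - c) ∈ S) :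
    a.mulVec (((S.card : ℝ))⁻¹ • ∑ x ∈ S, x) + c = ((S.card : ℝ))⁻¹ • ∑ x ∈ S, x := by
  set φ : (Fin d → ℝ) → (Fin d → ℝ) := fun x => a⁻¹.mulVec (x - c) with hφ
  have hinj : Function.Injective φ := by
    intro x y h
    have := congrArg a.mulVec h
    simp only [φ, sfp_cancel_left a ha] at this
    exact sub_left_injective this
  have himg : S.image φ = S := by
    apply Finset.eq_of_subset_of_card_le (Finset.image_subset_iff.mpr hmap)
    rw [Finset.card_image_of_injective _ hinj]
  have hsum : ∑ x ∈ S, φ x = ∑ x ∈ S, x := by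
    conv_rhs => rw [← himg]
    rw [Finset.sum_image (fun x _ y _ h => hinj h)]
  set s := ∑ x ∈ S, x with hs
  set n := S.card with hn
  have hnR : (n : ℝ) ≠ 0 := Nat.cast_ne_zero.mpr (Finset.card_ne_zero_of_mem hne.choose_spec)
  have key : ∑ x ∈ S, φ x = a⁻¹.mulVec (s - (n : ℝ) • c) := by
    have h1 : ∑ x ∈ S, φ x = a⁻¹.mulVecLin (∑ x ∈ S, (x - c)) := by
      rw [map_sum]; rfl
    rw [h1, Finset.sum_sub_distrib, Finset.sum_const, Matrix.mulVecLin_apply,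
      Nat.cast_smul_eq_nsmul ℝ]
  have hsum2 : a⁻¹.mulVec (s - (n : ℝ) • c) = s := by rw [← key, hsum]
  have happ : a.mulVec s = s - (n : ℝ) • c := by
    conv_lhs => rw [← hsum2, sfp_cancel_left a ha]
  have hmv_smul : a.mulVec ((n : ℝ)⁻¹ • s) = (n : ℝ)⁻¹ • a.mulVec s := by
    rw [show a.mulVec = ⇑a.mulVecLin from rfl]
    exact LinearMap.map_smul a.mulVecLin _ _
  rw [hmv_smul, happ, smul_sub, smul_smul, inv_mul_cancel₀ hnR, one_smul]
  abel

/-- The set of atoms of mass at least `ε > 0` of a probability measure is finite. -/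
private lemma sfp_finite_atoms {α : Type*} [MeasurableSpace α] [MeasurableSingletonClass α]
    (ξ : Measure α) [IsProbabilityMeasure ξ] (ε : ℝ≥0∞) (hε : ε ≠ 0) :
    {x | ε ≤ ξ {x}}.Finite := by
  by_contra hinf
  rw [← Set.Infinite] at hinf
  obtain ⟨n, hn⟩ := ENNReal.exists_nat_gt (ENNReal.inv_ne_top.mpr hε)
  obtain ⟨F, hFsub, hFcard⟩ := hinf.exists_subset_card_eq n
  have hsum : (F.card : ℝ≥0∞) * ε ≤ ∑ x ∈ F, ξ {x} := by
    calc (F.card : ℝ≥0∞) * ε = ∑ _x ∈ F, ε := by rw [Finset.sum_const, nsmul_eq_mul]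
    _ ≤ ∑ x ∈ F, ξ {x} := Finset.sum_le_sum (fun x hx => hFsub hx)
  have hmeas : ∑ x ∈ F, ξ {x} = ξ ↑F := by
    rw [show ((F : Set α)) = ⋃ x ∈ F, ({x} : Set α) from by ext y; simp]
    rw [measure_biUnion_finset ?_ (fun x _ => measurableSet_singleton x)]
    intro x _ y _ hxy
    simp [Function.onFun, Set.disjoint_singleton_left, hxy]
  have hle1 : (F.card : ℝ≥0∞) * ε ≤ 1 := by
    refine hsum.trans ?_
    rw [hmeas]; exact prob_le_one
  have hn0 : n ≠ 0 := by
    rintro rfl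
    simp at hn
  have hεtop : ε ≠ ⊤ := by
    intro h; rw [h] at hle1
    have hc : (F.card : ℝ≥0∞) ≠ 0 := by
      simp [hFcard, hn0]
    rw [ENNReal.mul_top hc] at hle1
    exact absurd hle1 (by simp)
  have : (F.card : ℝ≥0∞) ≤ ε⁻¹ := by
    rw [← ENNReal.le_div_iff_mul_le (Or.inl hε) (Or.inl hεtop)] at hle1
    simpa [one_div] using hle1
  rw [hFcard] at this
  exact absurd hn (not_lt.mpr this)

/-- An invertible affine map pulls back Lebesgue-null sets to null sets. -/
private lemma sfp_null_preimage {d : ℕ} (a : Matrix (Fin d) (Fin d) ℝ) (ha : a.det ≠ 0)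
    (c : Fin d → ℝ) (N : Set (Fin d → ℝ)) (hNm : MeasurableSet N) (hN : volume N = 0) :
    volume {y | a.mulVec y + c ∈ N} = 0 := by
  set L : ((Fin d) → ℝ) →ₗ[ℝ] (Fin d) → ℝ := Matrix.toLin' a with hL
  have hdetL : LinearMap.det L ≠ 0 := by rwa [hL, LinearMap.det_toLin']
  set K : Set (Fin d → ℝ) := (fun u => u + c) ⁻¹' N with hK
  have hKm : MeasurableSet K := hNm.preimage (measurable_id.add_const c)
  have hKvol : volume K = 0 := by
    rw [hK, measure_preimage_add_right]
    exact hN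
  have hset : {y | a.mulVec y + c ∈ N} = ⇑L ⁻¹' K := by
    ext y; simp [hK, hL, Matrix.toLin'_apply]
  rw [hset]
  have hmap := Real.map_linearMap_volume_pi_eq_smul_volume_pi hdetL
  have := congrArg (fun m => m K) hmap
  simp only [Measure.smul_apply, smul_eq_mul] at this
  rw [Measure.map_apply (LinearMap.continuous_on_pi L).measurable hKm] at this
  rw [this, hKvol, mul_zero]

/-- Scalar multiplication commutes with products of measures (on the left factor). -/
private lemma sfp_smul_prod {α β : Type*} [MeasurableSpace α] [MeasurableSpace β]
    (c : ℝ≥0∞) (m : Measure α) (ν : Measure β) [SFinite ν] :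
    (c • m).prod ν = c • m.prod ν := by
  ext s hs
  rw [Measure.prod_apply hs, Measure.smul_apply, Measure.prod_apply hs, lintegral_smul_measure,
    smul_eq_mul]

/-- **Atomlessness and pure type of solutions of stochastic fixed point equations**
(Buraczewski–Damek–Mikosch). Let `(A, C)` be a random element of `ℝ^{d×d} × ℝ^d` such that
(i) `A` is almost surely invertible; (ii) `P(Ax + C = x) < 1` for every `x ∈ ℝ^d`; and
(iii) there is a random vector `X`, independent of `(A, C)`, whose law equals the law of
`AX + C`, and the law of `X` is the unique probability distribution `ξ'` with this fixed point
property (expressed canonically: the pushforward of `ξ' ⊗ law(A,C)` under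
`(x, (a, c)) ↦ a x + c` is `ξ'`). Then the law of `X` has no atoms, and it is of pure type:
it is either absolutely continuous or singular with respect to Lebesgue measure on `ℝ^d`. -/
theorem stmt1 {Ω : Type*} [MeasurableSpace Ω] (P : Measure Ω) [IsProbabilityMeasure P]
    (d : ℕ) (A : Ω → Fin d → Fin d → ℝ) (C : Ω → Fin d → ℝ)
    (hA : Measurable A) (hC : Measurable C)
    (hinv : ∀ᵐ ω ∂P, (Matrix.of (A ω)).det ≠ 0)
    (hnofix : ∀ x : Fin d → ℝ, P {ω | (fun i => ∑ j, A ω i j * x j) + C ω = x} < 1)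
    (X : Ω → Fin d → ℝ) (hX : Measurable X)
    (hindep : IndepFun X (fun ω => (A ω, C ω)) P)
    (hsol : Measure.map X P = Measure.map (fun ω => (fun i => ∑ j, A ω i j * X ω j) + C ω) P)
    (huniq : ∀ ξ' : Measure (Fin d → ℝ), IsProbabilityMeasure ξ' →
      Measure.map
          (fun q : (Fin d → ℝ) × ((Fin d → Fin d → ℝ) × (Fin d → ℝ)) =>
            (fun i => ∑ j, q.2.1 i j * q.1 j) + q.2.2)
          (ξ'.prod (Measure.map (fun ω => (A ω, C ω)) P)) = ξ' →
        ξ' = Measure.map X P) :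
    (∀ x : Fin d → ℝ, Measure.map X P {x} = 0) ∧
      (Measure.map X P ≪ (volume : Measure (Fin d → ℝ)) ∨
        (Measure.map X P).MutuallySingular (volume : Measure (Fin d → ℝ))) := by
  classical
  set T : (Fin d → ℝ) × ((Fin d → Fin d → ℝ) × (Fin d → ℝ)) → (Fin d → ℝ) :=
    fun q => (fun i => ∑ j, q.2.1 i j * q.1 j) + q.2.2 with hTdef
  have hT : Measurable T := by fun_prop
  set ξ : Measure (Fin d → ℝ) := Measure.map X P with hξdef
  set μAC : Measure ((Fin d → Fin d → ℝ) × (Fin d → ℝ)) :=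
    Measure.map (fun ω => (A ω, C ω)) P with hμdef
  have hAC : Measurable fun ω => (A ω, C ω) := hA.prodMk hC
  haveI : IsProbabilityMeasure ξ := Measure.isProbabilityMeasure_map hX.aemeasurable
  haveI : IsProbabilityMeasure μAC := Measure.isProbabilityMeasure_map hAC.aemeasurable
  have hpair : Measure.map (fun ω => (X ω, (A ω, C ω))) P = ξ.prod μAC :=
    (indepFun_iff_map_prod_eq_prod_map_map hX.aemeasurable hAC.aemeasurable).mp hindep
  have hfix : Measure.map T (ξ.prod μAC) = ξ := by
    rw [← hpair, Measure.map_map hT (hX.prodMk hAC)]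
    exact hsol.symm
  -- a.e. invertibility w.r.t. the law of (A, C)
  have hdet_cont : Continuous fun z : (Fin d → Fin d → ℝ) × (Fin d → ℝ) =>
      (Matrix.of z.1).det := Continuous.matrix_det (by exact continuous_fst)
  have hdetm : MeasurableSet {z : (Fin d → Fin d → ℝ) × (Fin d → ℝ) |
      (Matrix.of z.1).det ≠ 0} := by
    have : {z : (Fin d → Fin d → ℝ) × (Fin d → ℝ) | (Matrix.of z.1).det ≠ 0} =
        ((fun z : (Fin d → Fin d → ℝ) × (Fin d → ℝ) => (Matrix.of z.1).det) ⁻¹' {0})ᶜ := by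
      ext z; simp
    rw [this]
    exact ((measurableSet_singleton (0 : ℝ)).preimage hdet_cont.measurable).compl
  have hμ_inv : ∀ᵐ z ∂μAC, (Matrix.of z.1).det ≠ 0 :=
    (ae_map_iff hAC.aemeasurable hdetm).mpr hinv
  -- Part 1 : no atoms
  have hatom : ∀ x : Fin d → ℝ, ξ {x} = 0 := by
    by_contra hcon
    push_neg at hcon
    obtain ⟨x₀, hx₀⟩ := hcon
    have hfin : {x | ξ {x₀} ≤ ξ {x}}.Finite := sfp_finite_atoms ξ _ hx₀
    obtain ⟨xm, hxm_mem, hxm_max⟩ :=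
      Finset.exists_max_image hfin.toFinset (fun x => ξ {x})
        ⟨x₀, by simp [Set.Finite.mem_toFinset]⟩
    set p := ξ {xm} with hpdef
    have hp_max : ∀ x, ξ {x} ≤ p := by
      intro x
      by_cases h : ξ {x₀} ≤ ξ {x}
      · exact hxm_max x (by simpa [Set.Finite.mem_toFinset] using h)
      · exact (not_le.mp h).le.trans (hxm_max x₀ (by simp [Set.Finite.mem_toFinset]))
    have hp_pos : p ≠ 0 := fun h => hx₀ (le_zero_iff.mp (h ▸ hp_max x₀))
    have hp_le1 : p ≤ 1 := prob_le_one
    have hp_top : p ≠ ⊤ := ne_top_of_le_ne_top ENNReal.one_ne_top hp_le1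
    set S : Finset (Fin d → ℝ) := hfin.toFinset.filter (fun x => ξ {x} = p) with hSdef
    have hSmem : ∀ x, x ∈ S ↔ ξ {x} = p := by
      intro x
      simp only [hSdef, Finset.mem_filter, Set.Finite.mem_toFinset, Set.mem_setOf_eq]
      constructor
      · rintro ⟨-, h⟩; exact h
      · intro h; exact ⟨by rw [h]; exact hp_max x₀, h⟩
    have hSne : S.Nonempty := ⟨xm, (hSmem xm).mpr rfl⟩
    -- the fixed point identity at singletons
    have hkey : ∀ x : Fin d → ℝ,
        ξ {x} = ∫⁻ z, ξ ((fun y => (y, z)) ⁻¹' (T ⁻¹' {x})) ∂μAC := by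
      intro x
      conv_lhs => rw [← hfix]
      rw [Measure.map_apply hT (measurableSet_singleton x),
        Measure.prod_apply_symm (hT (measurableSet_singleton x))]
    have hslice : ∀ z : (Fin d → Fin d → ℝ) × (Fin d → ℝ), (Matrix.of z.1).det ≠ 0 →
        ∀ x : Fin d → ℝ, ((fun y => (y, z)) ⁻¹' (T ⁻¹' {x})) =
          {(Matrix.of z.1)⁻¹.mulVec (x - z.2)} := by
      intro z hz x
      have h1 : ((fun y => (y, z)) ⁻¹' (T ⁻¹' {x})) =
          {y | (Matrix.of z.1).mulVec y + z.2 = x} := by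
        ext y
        simp only [Set.mem_preimage, Set.mem_singleton_iff, Set.mem_setOf_eq, hTdef]
        rw [sfp_mulVec_eq]
      rw [h1, sfp_singleton_preimage _ hz]
    -- a.e., the inverse affine map sends each max atom to a max atom
    have hae_in : ∀ x ∈ S, ∀ᵐ z ∂μAC, (Matrix.of z.1)⁻¹.mulVec (x - z.2) ∈ S := by
      intro x hx
      set g : (Fin d → Fin d → ℝ) × (Fin d → ℝ) → ℝ≥0∞ :=
        fun z => ξ ((fun y => (y, z)) ⁻¹' (T ⁻¹' {x})) with hgdef
      have hg_meas : Measurable g :=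
        measurable_measure_prodMk_right (hT (measurableSet_singleton x))
      have hg_int : ∫⁻ z, g z ∂μAC = p := by
        rw [← hkey x]; exact (hSmem x).mp hx
      have hg_le : ∀ᵐ z ∂μAC, g z ≤ p := by
        refine hμ_inv.mono fun z hz => ?_
        rw [hgdef]
        simp only
        rw [hslice z hz x]
        exact hp_max _
      have hsub : ∫⁻ z, (p - g z) ∂μAC = 0 := by
        rw [lintegral_sub' hg_meas.aemeasurable (by rw [hg_int]; exact hp_top) hg_le,
          lintegral_const, measure_univ, mul_one, hg_int, tsub_self]
      have hzero : ∀ᵐ z ∂μAC, p - g z = 0 := by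
        have := (lintegral_eq_zero_iff' (aemeasurable_const.sub hg_meas.aemeasurable)).mp hsub
        filter_upwards [this] with z hz using hz
      filter_upwards [hμ_inv, hg_le, hzero] with z hz hle hz0
      have hgp : g z = p := le_antisymm hle (tsub_eq_zero_iff_le.mp hz0)
      rw [hgdef] at hgp
      simp only at hgp
      rw [hslice z hz x] at hgp
      exact (hSmem _).mpr hgp
    have hae_all : ∀ᵐ z ∂μAC, (Matrix.of z.1).det ≠ 0 ∧
        ∀ x ∈ S, (Matrix.of z.1)⁻¹.mulVec (x - z.2) ∈ S := by
      refine hμ_inv.and ?_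
      have hcnt : (↑S : Set (Fin d → ℝ)).Countable := S.countable_toSet
      have := (ae_ball_iff hcnt).mpr (fun x hx => hae_in x hx)
      filter_upwards [this] with z hz x hxS using hz x hxS
    set b : Fin d → ℝ := ((S.card : ℝ))⁻¹ • ∑ x ∈ S, x with hbdef
    have hae_fix : ∀ᵐ z ∂μAC, T (b, z) = b := by
      filter_upwards [hae_all] with z hz
      obtain ⟨hzdet, hzmap⟩ := hz
      have := sfp_barycenter (Matrix.of z.1) hzdet z.2 S hSne hzmap
      calc T (b, z) = (Matrix.of z.1).mulVec b + z.2 := by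
            simp only [hTdef]; rw [sfp_mulVec_eq]
      _ = b := this
    have hmeasE : MeasurableSet {z : (Fin d → Fin d → ℝ) × (Fin d → ℝ) | T (b, z) = b} := by
      have : {z : (Fin d → Fin d → ℝ) × (Fin d → ℝ) | T (b, z) = b} =
          (fun z => T (b, z)) ⁻¹' {b} := rfl
      rw [this]
      exact (measurableSet_singleton b).preimage (hT.comp measurable_prodMk_left)
    have h1 : μAC {z | T (b, z) = b} = 1 := by
      rw [← prob_compl_eq_zero_iff hmeasE]
      rw [ae_iff] at hae_fix
      convert hae_fix using 2
      rfl
    have h2 : P {ω | (fun i => ∑ j, A ω i j * b j) + C ω = b} = 1 := by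
      rw [hμdef, Measure.map_apply hAC hmeasE] at h1
      exact h1
    exact absurd h2 (ne_of_lt (hnofix b))
  refine ⟨hatom, ?_⟩
  -- Part 2 : pure type
  set ξs : Measure (Fin d → ℝ) := ξ.singularPart volume with hξs
  set ξa : Measure (Fin d → ℝ) := volume.withDensity (ξ.rnDeriv volume) with hξa
  have hdec : ξ = ξs + ξa := (ξ.haveLebesgueDecomposition_add volume)
  have hsing : ξs ⟂ₘ volume := ξ.mutuallySingular_singularPart volume
  have hξa_ac : ξa ≪ volume := withDensity_absolutelyContinuous _ _
  haveI : IsFiniteMeasure ξs := isFiniteMeasure_of_le ξ (ξ.singularPart_le volume)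
  haveI : IsFiniteMeasure ξa := isFiniteMeasure_of_le ξ (ξ.withDensity_rnDeriv_le volume)
  -- the fixed point operator
  set F : Measure (Fin d → ℝ) → Measure (Fin d → ℝ) :=
    fun ν => Measure.map T (ν.prod μAC) with hFdef
  have hF_mass : ∀ ν : Measure (Fin d → ℝ), F ν Set.univ = ν Set.univ := by
    intro ν
    rw [hFdef]
    simp only
    rw [Measure.map_apply hT MeasurableSet.univ, Set.preimage_univ,
      ← Set.univ_prod_univ, Measure.prod_prod,
      show μAC Set.univ = 1 from measure_univ, mul_one]
  have hF_ac : ∀ ν : Measure (Fin d → ℝ), SFinite ν → ν ≪ volume → F ν ≪ volume := by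
    intro ν hsf hν
    haveI := hsf
    refine Measure.AbsolutelyContinuous.mk fun N hNm hN => ?_
    rw [hFdef]
    simp only
    rw [Measure.map_apply hT hNm, Measure.prod_apply_symm (hT hNm)]
    have hz : ∀ᵐ z ∂μAC, ν ((fun y => (y, z)) ⁻¹' (T ⁻¹' N)) = 0 := by
      filter_upwards [hμ_inv] with z hz
      have hset : ((fun y => (y, z)) ⁻¹' (T ⁻¹' N)) =
          {y | (Matrix.of z.1).mulVec y + z.2 ∈ N} := by
        ext y
        simp only [Set.mem_preimage, Set.mem_setOf_eq, hTdef]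
        rw [sfp_mulVec_eq]
      rw [hset]
      exact hν (sfp_null_preimage _ hz _ N hNm hN)
    calc ∫⁻ z, ν ((fun y => (y, z)) ⁻¹' (T ⁻¹' N)) ∂μAC
        = ∫⁻ _z, 0 ∂μAC := lintegral_congr_ae hz
    _ = 0 := lintegral_zero
  have hF_add : F ξ = F ξs + F ξa := by
    rw [hFdef]
    simp only
    rw [hdec, Measure.add_prod, Measure.map_add _ _ hT]
  -- decompose F ξs
  haveI : IsFiniteMeasure (F ξs) := by
    constructor
    rw [hF_mass ξs]
    exact measure_lt_top _ _
  set σ : Measure (Fin d → ℝ) := (F ξs).singularPart volume with hσdef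
  set α : Measure (Fin d → ℝ) := volume.withDensity ((F ξs).rnDeriv volume) with hαdef
  have hFs_dec : F ξs = σ + α := ((F ξs).haveLebesgueDecomposition_add volume)
  have hσ_sing : σ ⟂ₘ volume := (F ξs).mutuallySingular_singularPart volume
  have hα_ac : α ≪ volume := withDensity_absolutelyContinuous _ _
  haveI : IsFiniteMeasure σ := isFiniteMeasure_of_le (F ξs) ((F ξs).singularPart_le volume)
  haveI : IsFiniteMeasure α := isFiniteMeasure_of_le (F ξs) ((F ξs).withDensity_rnDeriv_le volume)
  set t : Measure (Fin d → ℝ) := α + F ξa with htdef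
  have ht_ac : t ≪ volume := by
    refine Measure.AbsolutelyContinuous.mk fun N hNm hN => ?_
    rw [htdef, Measure.add_apply, hα_ac hN, hF_ac ξa inferInstance hξa_ac hN, add_zero]
  haveI : IsFiniteMeasure (F ξa) := by
    constructor
    rw [hF_mass ξa]
    exact measure_lt_top _ _
  have hξ_eq : ξ = σ + t := by
    conv_lhs => rw [← hfix]
    have : Measure.map T (ξ.prod μAC) = F ξ := rfl
    rw [this, hF_add, hFs_dec, htdef]
    rw [add_assoc]
  -- uniqueness of the Lebesgue decomposition
  have hσ_eq : σ = ξs := by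
    have ht_wd : t = volume.withDensity (t.rnDeriv volume) :=
      (Measure.withDensity_rnDeriv_eq t volume ht_ac).symm
    have : ξ = σ + volume.withDensity (t.rnDeriv volume) := by rw [← ht_wd]; exact hξ_eq
    exact Measure.eq_singularPart (Measure.measurable_rnDeriv t volume) hσ_sing this
  have hξa_eq_t : ξa = t := by
    ext s hs
    have h1 : ξs s + ξa s = ξs s + t s := by
      have e1 : ξ s = ξs s + ξa s := by rw [hdec]; rfl
      have e2 : ξ s = ξs s + t s := by rw [hξ_eq, hσ_eq]; rfl
      rw [← e1, ← e2]
    exact ENNReal.add_right_inj (measure_ne_top ξs s) |>.mp h1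
  -- mass bookkeeping : α = 0, so F ξa = ξa
  have hα_zero : α = 0 := by
    have hmass : ξa Set.univ = α Set.univ + ξa Set.univ := by
      conv_lhs => rw [hξa_eq_t, htdef]
      rw [Measure.add_apply, hF_mass ξa]
    have : α Set.univ = 0 := by
      have := hmass.symm
      nth_rewrite 2 [show ξa Set.univ = 0 + ξa Set.univ by rw [zero_add]] at this
      exact ENNReal.add_left_inj (measure_ne_top ξa _) |>.mp this
    exact Measure.measure_univ_eq_zero.mp this
  have hFξa : F ξa = ξa := by
    conv_rhs => rw [hξa_eq_t, htdef, hα_zero, zero_add]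
  by_cases hξa0 : ξa = 0
  · -- singular case
    right
    have : ξ = ξs := by rw [hdec, hξa0, add_zero]
    rw [this]
    exact hsing
  · -- absolutely continuous case
    left
    have hma : ξa Set.univ ≠ 0 := fun h => hξa0 (Measure.measure_univ_eq_zero.mp h)
    have hmt : ξa Set.univ ≠ ⊤ := measure_ne_top _ _
    set c : ℝ≥0∞ := (ξa Set.univ)⁻¹ with hcdef
    set ν : Measure (Fin d → ℝ) := c • ξa with hνdef
    haveI hν_prob : IsProbabilityMeasure ν := by
      constructor
      rw [hνdef, Measure.smul_apply, smul_eq_mul, hcdef, ENNReal.inv_mul_cancel hma hmt]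
    have hν_fix : Measure.map T (ν.prod μAC) = ν := by
      rw [hνdef, sfp_smul_prod, Measure.map_smul]
      have : Measure.map T (ξa.prod μAC) = ξa := hFξa
      rw [this]
    have := huniq ν hν_prob hν_fix
    have hξ_eq_ν : ξ = ν := this.symm
    refine Measure.AbsolutelyContinuous.mk fun N hNm hN => ?_
    rw [hξ_eq_ν, hνdef, Measure.smul_apply, hξa_ac hN, smul_zero]
end

section
/- Let d ∈ ℕ, let A ∈ ℝ^{d×d} have spectral radius r(A) < 1, and let C be a d-dimensional random vector with E‖C‖ < ∞. If X is a d-dimensional random vector, independent of C, whose distribution equals the distribution of AX + C, then necessarily the distribution of X equals the distribution of Σ_{k=0}^∞ A^k C_k, where (C_k)_{k≥0} are independent copies of C. In particular, the solution of the distributional fixed point equation X =_d AX + C is unique in distribution. -/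
open MeasureTheory ProbabilityTheory Filter Matrix
open scoped ENNReal NNReal Topology

noncomputable def jC (d : ℕ) (x : EuclideanSpace ℝ (Fin d)) : EuclideanSpace ℂ (Fin d) :=
  WithLp.toLp 2 (fun i => (x i : ℂ))

lemma aux_apply (d : ℕ) (B : Matrix (Fin d) (Fin d) ℝ) (x : EuclideanSpace ℝ (Fin d)) :
    (Matrix.toEuclideanCLM (𝕜 := ℂ) (B.map Complex.ofReal)) (jC d x)
    = jC d ((Matrix.toEuclideanCLM (𝕜 := ℝ) B) x) := by
  ext i
  show (B.map Complex.ofReal).mulVec (fun j => (x j : ℂ)) i = ((B.mulVec (WithLp.ofLp x) i : ℝ) : ℂ)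
  simp [Matrix.mulVec, dotProduct]

lemma aux_norm (d : ℕ) (x : EuclideanSpace ℝ (Fin d)) : ‖jC d x‖ = ‖x‖ := by
  rw [EuclideanSpace.norm_eq, EuclideanSpace.norm_eq]
  simp [jC, Complex.norm_real]

lemma aux_opnorm (d : ℕ) (B : Matrix (Fin d) (Fin d) ℝ) :
    ‖(Matrix.toEuclideanCLM (𝕜 := ℝ) B)‖
      ≤ ‖(Matrix.toEuclideanCLM (𝕜 := ℂ) (B.map Complex.ofReal))‖ := by
  refine ContinuousLinearMap.opNorm_le_bound _ (norm_nonneg _) (fun x => ?_)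
  calc ‖(Matrix.toEuclideanCLM (𝕜 := ℝ) B) x‖
      = ‖jC d ((Matrix.toEuclideanCLM (𝕜 := ℝ) B) x)‖ := (aux_norm d _).symm
    _ = ‖(Matrix.toEuclideanCLM (𝕜 := ℂ) (B.map Complex.ofReal)) (jC d x)‖ := by
        rw [aux_apply]
    _ ≤ ‖(Matrix.toEuclideanCLM (𝕜 := ℂ) (B.map Complex.ofReal))‖ * ‖jC d x‖ :=
        ContinuousLinearMap.le_opNorm _ _
    _ = _ := by rw [aux_norm]

set_option synthInstance.maxHeartbeats 400000 in
set_option maxHeartbeats 1000000 in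
lemma aux_geo (d : ℕ) (A : Matrix (Fin d) (Fin d) ℝ)
    (hr : spectralRadius ℂ (A.map Complex.ofReal) < 1) :
    ∃ ρ : ℝ, 0 ≤ ρ ∧ ρ < 1 ∧ ∃ N : ℕ, ∀ n ≥ N,
      ‖(Matrix.toEuclideanCLM (𝕜 := ℝ) A) ^ n‖ ≤ ρ ^ n := by
  set M := Matrix.toEuclideanCLM (𝕜 := ℂ) (A.map Complex.ofReal) with hM
  have hspec : spectralRadius ℂ M = spectralRadius ℂ (A.map Complex.ofReal) := by
    unfold spectralRadius
    rw [AlgEquiv.spectrum_eq (Matrix.toEuclideanCLM (𝕜 := ℂ) (n := Fin d))]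
  have hgel := spectrum.pow_nnnorm_pow_one_div_tendsto_nhds_spectralRadius M
  rw [hspec] at hgel
  obtain ⟨ρ, hρ1, hρ2⟩ := exists_between hr
  have hev : ∀ᶠ n : ℕ in atTop, (‖M ^ n‖₊ : ℝ≥0∞) ^ (1 / (n:ℝ)) < ρ :=
    hgel.eventually_lt_const hρ1
  have hρtop : ρ ≠ ⊤ := (hρ2.trans_le le_top).ne
  refine ⟨ρ.toReal, ENNReal.toReal_nonneg, ?_, ?_⟩
  · have := (ENNReal.toReal_lt_toReal hρtop (by norm_num)).2 hρ2
    simpa using this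
  · obtain ⟨N, hN⟩ := eventually_atTop.1 hev
    refine ⟨max N 1, fun n hn => ?_⟩
    have hn1 : 1 ≤ n := le_trans (le_max_right _ _) hn
    have h1 := hN n (le_trans (le_max_left _ _) hn)
    -- from h1 : ‖M^n‖₊ ^ (1/n) < ρ deduce ‖M^n‖₊ ≤ ρ^n in ℝ≥0∞
    have hne : (n : ℝ) ≠ 0 := by positivity
    have h2 : (‖M ^ n‖₊ : ℝ≥0∞) ≤ ρ ^ (n : ℝ) := by
      have := ENNReal.rpow_le_rpow h1.le (by positivity : (0:ℝ) ≤ (n:ℝ))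
      rwa [← ENNReal.rpow_mul, one_div, inv_mul_cancel₀ hne, ENNReal.rpow_one] at this
    have h3 : ‖M ^ n‖ ≤ ρ.toReal ^ n := by
      have := ENNReal.toReal_mono (by simp [ENNReal.pow_ne_top hρtop] : ρ ^ (n:ℝ) ≠ ⊤) h2
      rw [← ENNReal.toReal_rpow, Real.rpow_natCast] at this
      simpa using this
    refine le_trans ?_ h3
    have hpow : (Matrix.toEuclideanCLM (𝕜 := ℝ) A) ^ n
        = Matrix.toEuclideanCLM (𝕜 := ℝ) (A ^ n) := (map_pow _ _ _).symm
    have hpowC : M ^ n = Matrix.toEuclideanCLM (𝕜 := ℂ) ((A ^ n).map Complex.ofReal) := by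
      rw [hM, ← map_pow]
      congr 1
      exact (RingHom.map_pow (Complex.ofRealHom.mapMatrix) A n).symm
    rw [hpow, hpowC]
    exact aux_opnorm d (A ^ n)

set_option maxHeartbeats 1000000 in
set_option synthInstance.maxHeartbeats 1000000 in
lemma aux_key {Ω : Type*} [MeasurableSpace Ω] (P : Measure Ω) [IsProbabilityMeasure P]
    (d : ℕ) (A : Matrix (Fin d) (Fin d) ℝ)
    (hr : spectralRadius ℂ (A.map Complex.ofReal) < 1)
    (C : Ω → EuclideanSpace ℝ (Fin d)) (hCmeas : Measurable C) (hCint : Integrable C P)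
    (X : Ω → EuclideanSpace ℝ (Fin d)) (hXmeas : Measurable X)
    (hXindep : IndepFun X C P)
    (hXfix : Measure.map X P
      = Measure.map (fun ω => (Matrix.toEuclideanCLM (𝕜 := ℝ) A) (X ω) + C ω) P)
    {Ω' : Type*} [MeasurableSpace Ω'] (P' : Measure Ω') [IsProbabilityMeasure P']
    (Ck : ℕ → Ω' → EuclideanSpace ℝ (Fin d))
    (hCkmeas : ∀ k, Measurable (Ck k))
    (hCkindep : iIndepFun Ck P')
    (hCkident : ∀ k, Measure.map (Ck k) P' = Measure.map C P) :
    Measure.map X P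
      = Measure.map
          (fun ω' => ∑' k : ℕ, ((Matrix.toEuclideanCLM (𝕜 := ℝ) A) ^ k) (Ck k ω')) P' := by
  set T : EuclideanSpace ℝ (Fin d) →L[ℝ] EuclideanSpace ℝ (Fin d) :=
    Matrix.toEuclideanCLM (𝕜 := ℝ) A with hT
  set h : ℕ → Ω' → EuclideanSpace ℝ (Fin d) := fun k ω' => (T ^ k) (Ck k ω') with hh
  set S : ℕ → Ω' → EuclideanSpace ℝ (Fin d) := fun n ω' => ∑ k ∈ Finset.range n, h k ω' with hS
  set Y : Ω' → EuclideanSpace ℝ (Fin d) := fun ω' => ∑' k, h k ω' with hY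
  have hhmeas : ∀ k, Measurable (h k) := fun k => ((T ^ k).continuous.measurable).comp (hCkmeas k)
  have hSmeas : ∀ n, Measurable (S n) := fun n =>
    Finset.measurable_sum _ (fun k _ => hhmeas k)
  -- geometric estimates
  obtain ⟨ρ, hρ0, hρ1, N, hgeo⟩ := aux_geo d A hr
  have hTsum : Summable (fun k => ‖T ^ k‖) := by
    rw [← summable_nat_add_iff N]
    refine Summable.of_nonneg_of_le (fun k => norm_nonneg _)
      (fun k => hgeo (k + N) (Nat.le_add_left N k)) ?_
    simpa [pow_add] using (summable_geometric_of_lt_one hρ0 hρ1).mul_right (ρ ^ N)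
  have hT0 : Tendsto (fun n => ‖T ^ n‖) atTop (𝓝 0) := hTsum.tendsto_atTop_zero
  -- integrability
  have hCk_lint : ∀ k, ∫⁻ ω', (‖Ck k ω'‖₊ : ℝ≥0∞) ∂P' = ∫⁻ ω, (‖C ω‖₊ : ℝ≥0∞) ∂P := by
    intro k
    rw [← lintegral_map (measurable_nnnorm.coe_nnreal_ennreal) (hCkmeas k), hCkident k,
      lintegral_map (measurable_nnnorm.coe_nnreal_ennreal) hCmeas]
  have hCfin : ∫⁻ ω, (‖C ω‖₊ : ℝ≥0∞) ∂P < ⊤ := by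
    have := hCint.2
    rwa [HasFiniteIntegral] at this
  have hsum_lint : ∫⁻ ω', ∑' k, (‖h k ω'‖₊ : ℝ≥0∞) ∂P' < ⊤ := by
    rw [lintegral_tsum (fun k => ((hhmeas k).nnnorm.coe_nnreal_ennreal).aemeasurable)]
    have hle : ∀ k, ∫⁻ ω', (‖h k ω'‖₊ : ℝ≥0∞) ∂P'
        ≤ (‖T ^ k‖₊ : ℝ≥0∞) * ∫⁻ ω, (‖C ω‖₊ : ℝ≥0∞) ∂P := by
      intro k
      rw [← hCk_lint k, ← lintegral_const_mul _ ((hCkmeas k).nnnorm.coe_nnreal_ennreal)]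
      refine lintegral_mono (fun ω' => ?_)
      have h2 := (T ^ k).le_opNNNorm (Ck k ω')
      rw [← ENNReal.coe_mul]
      exact ENNReal.coe_le_coe.2 h2
    refine lt_of_le_of_lt (ENNReal.tsum_le_tsum hle) ?_
    rw [ENNReal.tsum_mul_right]
    refine ENNReal.mul_lt_top ?_ hCfin
    rw [lt_top_iff_ne_top, ENNReal.tsum_coe_ne_top_iff_summable]
    exact NNReal.summable_coe.1 (by simpa [coe_nnnorm] using hTsum)
  have hae_sum : ∀ᵐ ω' ∂P', Summable (fun k => h k ω') := by
    have hmeas : Measurable (fun ω' => ∑' k, (‖h k ω'‖₊ : ℝ≥0∞)) :=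
      Measurable.ennreal_tsum (fun k => (hhmeas k).nnnorm.coe_nnreal_ennreal)
    filter_upwards [ae_lt_top hmeas hsum_lint.ne] with ω' hω'
    have h1 : Summable (fun k => ‖h k ω'‖₊) :=
      ENNReal.tsum_coe_ne_top_iff_summable.1 hω'.ne
    exact Summable.of_nnnorm h1
  have hae_tendsto : ∀ᵐ ω' ∂P', Tendsto (fun n => S n ω') atTop (𝓝 (Y ω')) := by
    filter_upwards [hae_sum] with ω' hω'
    exact hω'.hasSum.tendsto_sum_nat
  have hYaem : AEMeasurable Y P' :=
    aemeasurable_of_tendsto_metrizable_ae _ (fun n => (hSmeas n).aemeasurable) hae_tendsto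
  -- Claim B : the law of X equals the law of `T^n X + S n` on the product space
  have hZ : ∀ n : ℕ,
      Measure.map (fun p : Ω × Ω' => (T ^ n) (X p.1) + S n p.2) (P.prod P')
        = Measure.map X P := by
    intro n
    induction n with
    | zero =>
      have hfun : (fun p : Ω × Ω' => (T ^ 0) (X p.1) + S 0 p.2) = X ∘ Prod.fst := by
        funext p
        simp [hS]
      rw [hfun, ← Measure.map_map hXmeas measurable_fst, Measure.map_fst_prod, measure_univ,
        one_smul]
    | succ n ih =>
      -- independence of `Ck n` and `S n`
      have hind : IndepFun (Ck n) (S n) P' := by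
        have h2 := hCkindep.indepFun_finset {n} (Finset.range n)
          (by simp [Finset.disjoint_left]) hCkmeas
        have hφ : Measurable (fun v : ({n} : Finset ℕ) → EuclideanSpace ℝ (Fin d) =>
            v ⟨n, Finset.mem_singleton_self n⟩) := measurable_pi_apply _
        have hψ : Measurable (fun v : {x : ℕ // x ∈ Finset.range n} → EuclideanSpace ℝ (Fin d) =>
            ∑ i : {x : ℕ // x ∈ Finset.range n}, (T ^ (i : ℕ)) (v i)) :=
          Finset.measurable_sum _ (fun i _ =>
            ((T ^ (i : ℕ)).continuous.measurable).comp (measurable_pi_apply i))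
        have h3 := h2.comp hφ hψ
        have h4 : (fun a => ∑ i : {x : ℕ // x ∈ Finset.range n}, (T ^ (i : ℕ)) (Ck (i : ℕ) a))
            = S n := by
          funext a
          rw [hS]
          exact Finset.sum_coe_sort (Finset.range n) (fun k => (T ^ k) (Ck k a))
        rw [← h4]
        exact h3
      -- law of the pair (Ck n, S n)
      have hpair : Measure.map (fun ω' => (Ck n ω', S n ω')) P'
          = (Measure.map C P).prod (Measure.map (S n) P') := by
        rw [← hCkident n]
        exact (indepFun_iff_map_prod_eq_prod_map_map (hCkmeas n).aemeasurable
          (hSmeas n).aemeasurable).1 hind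
      -- law of the triple
      have hinnermeas : Measurable (fun p : Ω × Ω' => (X p.1, (Ck n p.2, S n p.2))) :=
        (hXmeas.comp measurable_fst).prodMk
          (((hCkmeas n).comp measurable_snd).prodMk ((hSmeas n).comp measurable_snd))
      have htriple : Measure.map (fun p : Ω × Ω' => (X p.1, (Ck n p.2, S n p.2))) (P.prod P')
          = (Measure.map X P).prod ((Measure.map C P).prod (Measure.map (S n) P')) := by
        have heq : (fun p : Ω × Ω' => (X p.1, (Ck n p.2, S n p.2)))
            = Prod.map X (fun ω' => (Ck n ω', S n ω')) := rfl
        rw [heq, ← Measure.map_prod_map _ _ hXmeas ((hCkmeas n).prodMk (hSmeas n)), hpair]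
      -- the pair law (X, S n) on the product space
      have hpair2 : Measure.map (fun p : Ω × Ω' => (X p.1, S n p.2)) (P.prod P')
          = (Measure.map X P).prod (Measure.map (S n) P') := by
        have heq : (fun p : Ω × Ω' => (X p.1, S n p.2)) = Prod.map X (S n) := rfl
        rw [heq, ← Measure.map_prod_map _ _ hXmeas (hSmeas n)]
      -- auxiliary continuous maps
      set g : EuclideanSpace ℝ (Fin d) × EuclideanSpace ℝ (Fin d) → EuclideanSpace ℝ (Fin d) := fun t => (T ^ n) t.1 + t.2 with hgdef
      have hgmeas : Measurable g :=
        (((T ^ n).continuous.comp continuous_fst).add continuous_snd).measurable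
      set q : EuclideanSpace ℝ (Fin d) × EuclideanSpace ℝ (Fin d) → EuclideanSpace ℝ (Fin d) := fun t => T t.1 + t.2 with hqdef
      have hqmeas : Measurable q :=
        ((T.continuous.comp continuous_fst).add continuous_snd).measurable
      set F : EuclideanSpace ℝ (Fin d) × (EuclideanSpace ℝ (Fin d) × EuclideanSpace ℝ (Fin d)) → EuclideanSpace ℝ (Fin d) := fun t => (T ^ n) (T t.1 + t.2.1) + t.2.2 with hFdef
      have hFmeas : Measurable F :=
        (((T ^ n).continuous.comp ((T.continuous.comp continuous_fst).add
          (continuous_fst.comp continuous_snd))).add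
          (continuous_snd.comp continuous_snd)).measurable
      set G : (EuclideanSpace ℝ (Fin d) × EuclideanSpace ℝ (Fin d)) × EuclideanSpace ℝ (Fin d) → EuclideanSpace ℝ (Fin d) := fun t => (T ^ n) (T t.1.1 + t.1.2) + t.2 with hGdef
      have hGmeas : Measurable G :=
        (((T ^ n).continuous.comp ((T.continuous.comp (continuous_fst.comp continuous_fst)).add
          (continuous_snd.comp continuous_fst))).add continuous_snd).measurable
      -- measures
      set μX := Measure.map X P with hμX
      set μc := Measure.map C P with hμc
      set μS := Measure.map (S n) P' with hμS
      -- the chain of equalities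
      have hZsucc : (fun p : Ω × Ω' => (T ^ (n+1)) (X p.1) + S (n+1) p.2)
          = F ∘ (fun p : Ω × Ω' => (X p.1, (Ck n p.2, S n p.2))) := by
        funext p
        show (T ^ (n+1)) (X p.1) + S (n+1) p.2 = (T ^ n) (T (X p.1) + Ck n p.2) + S n p.2
        rw [hS]
        simp only [Finset.sum_range_succ, map_add, pow_succ]
        rw [ContinuousLinearMap.mul_apply]
        rw [hh]
        abel
      have c0 : Measure.map (fun p : Ω × Ω' => (T ^ (n+1)) (X p.1) + S (n+1) p.2) (P.prod P')
          = Measure.map F (μX.prod (μc.prod μS)) := by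
        rw [hZsucc, ← Measure.map_map hFmeas hinnermeas, htriple]
      have c1 : Measure.map F (μX.prod (μc.prod μS))
          = Measure.map G ((μX.prod μc).prod μS) := by
        have hFG : F = G ∘ (MeasurableEquiv.prodAssoc
            (α := EuclideanSpace ℝ (Fin d)) (β := EuclideanSpace ℝ (Fin d)) (γ := EuclideanSpace ℝ (Fin d))).symm := rfl
        rw [hFG, ← Measure.map_map hGmeas (MeasurableEquiv.prodAssoc.symm.measurable),
          ((measurePreserving_prodAssoc μX μc μS).symm MeasurableEquiv.prodAssoc).map_eq]
      have c2 : Measure.map G ((μX.prod μc).prod μS)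
          = Measure.map g ((Measure.map q (μX.prod μc)).prod μS) := by
        have hGg : G = g ∘ (Prod.map q id) := rfl
        rw [hGg, ← Measure.map_map hgmeas (hqmeas.prodMap measurable_id),
          ← Measure.map_prod_map _ _ hqmeas measurable_id, Measure.map_id]
      have hqlaw : Measure.map q (μX.prod μc) = μX := by
        have hXC : μX.prod μc = Measure.map (fun ω => (X ω, C ω)) P :=
          ((indepFun_iff_map_prod_eq_prod_map_map hXmeas.aemeasurable
            hCmeas.aemeasurable).1 hXindep).symm
        rw [hXC, Measure.map_map hqmeas (hXmeas.prodMk hCmeas)]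
        exact hXfix.symm
      have c3 : Measure.map g (μX.prod μS)
          = Measure.map (fun p : Ω × Ω' => (T ^ n) (X p.1) + S n p.2) (P.prod P') := by
        have hZn : (fun p : Ω × Ω' => (T ^ n) (X p.1) + S n p.2)
            = g ∘ (fun p : Ω × Ω' => (X p.1, S n p.2)) := rfl
        have hm : Measurable (fun p : Ω × Ω' => (X p.1, S n p.2)) :=
          (hXmeas.comp measurable_fst).prodMk ((hSmeas n).comp measurable_snd)
        rw [hZn, ← Measure.map_map hgmeas hm, hpair2]
      rw [c0, c1, c2, hqlaw, c3, ih]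
  -- measurability of the iterates
  have hZmeas : ∀ n : ℕ, Measurable (fun p : Ω × Ω' => (T ^ n) (X p.1) + S n p.2) := fun n =>
    ((((T ^ n).continuous.comp continuous_fst).add continuous_snd).measurable).comp
      ((hXmeas.comp measurable_fst).prodMk ((hSmeas n).comp measurable_snd))
  -- conclude via bounded continuous functions
  haveI : IsProbabilityMeasure (Measure.map X P) := Measure.isProbabilityMeasure_map hXmeas.aemeasurable
  refine ext_of_forall_lintegral_eq_of_IsFiniteMeasure (fun f => ?_)
  have hfm : Measurable (fun x : EuclideanSpace ℝ (Fin d) => (f x : ℝ≥0∞)) :=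
    measurable_coe_nnreal_ennreal.comp f.continuous.measurable
  have hL : ∀ n : ℕ, ∫⁻ p, (f ((T ^ n) (X p.1) + S n p.2) : ℝ≥0∞) ∂(P.prod P')
      = ∫⁻ x, (f x : ℝ≥0∞) ∂(Measure.map X P) := by
    intro n
    rw [← hZ n, lintegral_map hfm (hZmeas n)]
  have hptwise : ∀ᵐ p ∂(P.prod P'),
      Tendsto (fun n => (f ((T ^ n) (X p.1) + S n p.2) : ℝ≥0∞)) atTop (𝓝 (f (Y p.2))) := by
    have hq := Measure.quasiMeasurePreserving_snd (μ := P) (ν := P')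
    filter_upwards [hq.ae hae_tendsto] with p hp
    have h1 : Tendsto (fun n => (T ^ n) (X p.1)) atTop (𝓝 0) := by
      refine squeeze_zero_norm (fun n => (T ^ n).le_opNorm (X p.1)) ?_
      simpa using hT0.mul_const ‖X p.1‖
    have h2 : Tendsto (fun n => (T ^ n) (X p.1) + S n p.2) atTop (𝓝 (Y p.2)) := by
      simpa using h1.add hp
    exact ENNReal.tendsto_coe.2 ((f.continuous.tendsto _).comp h2)
  have hdom := tendsto_lintegral_of_dominated_convergence
    (μ := P.prod P')
    (F := fun n p => (f ((T ^ n) (X p.1) + S n p.2) : ℝ≥0∞))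
    (f := fun p => (f (Y p.2) : ℝ≥0∞))
    (fun _ => (nndist f 0 : ℝ≥0∞))
    (fun n => hfm.comp (hZmeas n))
    (fun n => Filter.Eventually.of_forall (fun p =>
      ENNReal.coe_le_coe.2 (BoundedContinuousFunction.NNReal.upper_bound f _)))
    (by simp [lintegral_const])
    hptwise
  have hconst : Tendsto (fun n : ℕ => ∫⁻ p, (f ((T ^ n) (X p.1) + S n p.2) : ℝ≥0∞) ∂(P.prod P'))
      atTop (𝓝 (∫⁻ x, (f x : ℝ≥0∞) ∂(Measure.map X P))) := by
    simp only [hL]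
    exact tendsto_const_nhds
  have hmain : ∫⁻ x, (f x : ℝ≥0∞) ∂(Measure.map X P)
      = ∫⁻ p, (f (Y p.2) : ℝ≥0∞) ∂(P.prod P') := tendsto_nhds_unique hconst hdom
  have hms : Measure.map (Prod.snd : Ω × Ω' → Ω') (P.prod P') = P' := by
    rw [Measure.map_snd_prod, measure_univ, one_smul]
  have hsnd : ∫⁻ p, (f (Y p.2) : ℝ≥0∞) ∂(P.prod P') = ∫⁻ ω', (f (Y ω') : ℝ≥0∞) ∂P' := by
    have haem : AEMeasurable (fun ω' => (f (Y ω') : ℝ≥0∞))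
        (Measure.map (Prod.snd : Ω × Ω' → Ω') (P.prod P')) := by
      rw [hms]
      exact hfm.comp_aemeasurable hYaem
    have := lintegral_map' haem measurable_snd.aemeasurable
    rw [hms] at this
    exact this.symm
  rw [hmain, hsnd, lintegral_map' hfm.aemeasurable hYaem]

/-- Let `A ∈ ℝ^{d×d}` have spectral radius `r(A) < 1` (over `ℂ`), and let `C` be a
`d`-dimensional random vector with `E‖C‖ < ∞`. If `X` is a random vector independent of `C`
whose law equals the law of `A X + C`, then the law of `X` equals the law of
`∑'_k A^k C_k`, where `(C_k)` are independent copies of `C` (on any probability space);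
in particular any two solutions of the fixed point equation `X =_d A X + C` have the same
law. Here `A` acts through the continuous linear map it induces on Euclidean space. -/
theorem stmt5 {Ω : Type*} [MeasurableSpace Ω] (P : Measure Ω) [IsProbabilityMeasure P]
    (d : ℕ) (A : Matrix (Fin d) (Fin d) ℝ)
    (hr : spectralRadius ℂ (A.map Complex.ofReal) < 1)
    (C : Ω → EuclideanSpace ℝ (Fin d)) (hCmeas : Measurable C) (hCint : Integrable C P)
    (X : Ω → EuclideanSpace ℝ (Fin d)) (hXmeas : Measurable X)
    (hXindep : IndepFun X C P)
    (hXfix : Measure.map X P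
      = Measure.map (fun ω => (Matrix.toEuclideanCLM (𝕜 := ℝ) A) (X ω) + C ω) P)
    {Ω' : Type*} [MeasurableSpace Ω'] (P' : Measure Ω') [IsProbabilityMeasure P']
    (Ck : ℕ → Ω' → EuclideanSpace ℝ (Fin d))
    (hCkmeas : ∀ k, Measurable (Ck k))
    (hCkindep : iIndepFun Ck P')
    (hCkident : ∀ k, Measure.map (Ck k) P' = Measure.map C P) :
    Measure.map X P
      = Measure.map
          (fun ω' => ∑' k : ℕ, ((Matrix.toEuclideanCLM (𝕜 := ℝ) A) ^ k) (Ck k ω')) P' ∧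
    ∀ (Ω'' : Type*) (_ : MeasurableSpace Ω'') (P'' : Measure Ω''),
      IsProbabilityMeasure P'' →
      ∀ X'' C'' : Ω'' → EuclideanSpace ℝ (Fin d),
        Measurable X'' → Measurable C'' →
        Measure.map C'' P'' = Measure.map C P →
        IndepFun X'' C'' P'' →
        Measure.map X'' P''
          = Measure.map (fun ω => (Matrix.toEuclideanCLM (𝕜 := ℝ) A) (X'' ω) + C'' ω) P'' →
        Measure.map X'' P'' = Measure.map X P := by
  have key := aux_key P d A hr C hCmeas hCint X hXmeas hXindep hXfix P' Ck hCkmeas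
    hCkindep hCkident
  refine ⟨key, ?_⟩
  intro Ω'' m'' P'' hP'' X'' C'' hX''m hC''m hC''law hindep'' hfix''
  haveI := hP''
  have hC''int : Integrable C'' P'' := by
    have h1 : Integrable (fun x => x) (Measure.map C P) :=
      (integrable_map_measure aestronglyMeasurable_id hCmeas.aemeasurable).2 hCint
    rw [← hC''law] at h1
    exact (integrable_map_measure aestronglyMeasurable_id hC''m.aemeasurable).1 h1
  have key'' := aux_key P'' d A hr C'' hC''m hC''int X'' hX''m hindep'' hfix'' P' Ck hCkmeas
    hCkindep (fun k => (hCkident k).trans hC''law.symm)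
  rw [key'', ← key]
end

section
/- Let λ ∈ ℂ with Im(λ) ≠ 0, let s ∈ ℝ with 2Re(λ) < s, and let b ∈ ℂ with b ≠ 0. For w ≥ 0 set g(w) := (Re(e^{−(s−2λ)w/2} b), Im(e^{−(s−2λ)w/2} b))^⊤ ∈ ℝ². Then the 2×2 real matrix ∫_0^∞ g(w) g(w)^⊤ dw is strictly positive definite; equivalently, for every (a,β)^⊤ ∈ ℝ²∖{0} one has ∫_0^∞ (Re((a − iβ) e^{−(s−2λ)w/2} b))² dw > 0. -/
open MeasureTheory Real Set

lemma aux_int (μ : ℂ) (hre : 0 < μ.re) (c d : ℂ) :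
    IntegrableOn (fun w : ℝ => (c * Complex.exp (-(μ*w))).re * (d * Complex.exp (-(μ*w))).re)
      (Set.Ioi 0) := by
  have hg : IntegrableOn (fun w : ℝ => (‖c‖ * ‖d‖) * Real.exp (-(2*μ.re) * w))
      (Set.Ioi 0) := (exp_neg_integrableOn_Ioi 0 (by linarith)).const_mul _
  refine Integrable.mono' hg ?_ ?_
  · apply Continuous.aestronglyMeasurable; fun_prop
  · filter_upwards with w
    have h1 : ‖c * Complex.exp (-(μ*w))‖ = ‖c‖ * Real.exp (-μ.re * w) := by
      rw [norm_mul, Complex.norm_exp]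
      simp [Complex.mul_re]
    have h2 : ‖d * Complex.exp (-(μ*w))‖ = ‖d‖ * Real.exp (-μ.re * w) := by
      rw [norm_mul, Complex.norm_exp]
      simp [Complex.mul_re]
    calc |(c * Complex.exp (-(μ*w))).re * (d * Complex.exp (-(μ*w))).re|
        ≤ ‖c * Complex.exp (-(μ*w))‖ * ‖d * Complex.exp (-(μ*w))‖ := by
          rw [abs_mul]
          exact mul_le_mul (Complex.abs_re_le_norm _) (Complex.abs_re_le_norm _)
            (abs_nonneg _) (norm_nonneg _)
      _ = ‖c‖ * ‖d‖ * Real.exp (-(2*μ.re) * w) := by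
          rw [h1, h2, show (-(2*μ.re)*w) = (-μ.re*w) + (-μ.re*w) by ring, Real.exp_add]; ring

lemma aux_ne (μ : ℂ) (him : μ.im ≠ 0) (c : ℂ) (hc : c ≠ 0) :
    ∃ w : ℝ, 0 < w ∧ (c * Complex.exp (-(μ*w))).re ≠ 0 := by
  by_contra h
  push_neg at h
  set T := Real.pi / (2 * μ.im) with hT
  set w := |T| + 1 with hw
  have hw0 : 0 < w := by positivity
  have hwT : 0 < w + T := by
    have h1 := abs_nonneg T; have h2 := neg_abs_le T; simp only [hw]; linarith
  have h1 := h w hw0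
  have h2 := h (w+T) hwT
  have hTμ : μ.im * T = Real.pi / 2 := by
    rw [hT]; field_simp
  have hsplit : -(μ*((w:ℝ)+T : ℝ)) = -(μ*w) + ((↑(-(μ.re*T)) : ℂ) + (↑(-(μ.im*T)) : ℂ) * Complex.I) := by
    apply Complex.ext <;> simp [Complex.mul_re, Complex.mul_im] <;> ring
  have h3 : Complex.exp ((↑(-(μ.im*T)) : ℂ) * Complex.I) = -Complex.I := by
    rw [Complex.exp_mul_I, ← Complex.ofReal_cos, ← Complex.ofReal_sin]
    rw [show -(μ.im*T) = -(Real.pi/2) by rw [hTμ]]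
    simp
  have hexp : Complex.exp (-(μ*((w:ℝ)+T:ℝ))) =
      Complex.exp (-(μ*w)) * (((Real.exp (-(μ.re*T)) : ℝ) : ℂ) * (-Complex.I)) := by
    rw [hsplit, Complex.exp_add, Complex.exp_add, h3, ← Complex.ofReal_exp]
  rw [hexp, ← mul_assoc] at h2
  set z := c * Complex.exp (-(μ*(w:ℝ))) with hz
  set r := Real.exp (-(μ.re*T)) with hr
  have h2' : r * z.im = 0 := by
    rw [← h2]
    simp [Complex.mul_re]
    ring
  have him0 : z.im = 0 := by
    have hrpos : 0 < r := Real.exp_pos _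
    rcases mul_eq_zero.mp h2' with h' | h'
    · linarith
    · exact h'
  have hz0 : z = 0 := Complex.ext h1 him0
  rw [hz] at hz0
  rcases mul_eq_zero.mp hz0 with h' | h'
  · exact hc h'
  · exact Complex.exp_ne_zero _ h'

lemma aux_pos (μ : ℂ) (hre : 0 < μ.re) (him : μ.im ≠ 0) (c : ℂ) (hc : c ≠ 0) :
    0 < ∫ w in Set.Ioi (0:ℝ), ((c * Complex.exp (-(μ*w))).re)^2 := by
  have hint : IntegrableOn (fun w : ℝ => ((c * Complex.exp (-(μ*w))).re)^2) (Set.Ioi 0) := by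
    simpa [sq] using aux_int μ hre c c
  rw [setIntegral_pos_iff_support_of_nonneg_ae (ae_of_all _ fun w => sq_nonneg _) hint]
  obtain ⟨w₀, hw₀, hne⟩ := aux_ne μ him c hc
  have hcont : Continuous fun w : ℝ => ((c * Complex.exp (-(μ*w))).re)^2 := by fun_prop
  have hopen : IsOpen (Function.support fun w : ℝ => ((c * Complex.exp (-(μ*w))).re)^2) := by
    rw [Function.support_eq_preimage]
    exact isOpen_compl_singleton.preimage hcont
  have : IsOpen ((Function.support fun w : ℝ => ((c * Complex.exp (-(μ*w))).re)^2) ∩ Set.Ioi 0) :=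
    hopen.inter isOpen_Ioi
  refine this.measure_pos volume ⟨w₀, ?_, hw₀⟩
  exact pow_ne_zero 2 hne

/-- For `λ ∈ ℂ` with `Im λ ≠ 0`, `s ∈ ℝ` with `2 Re λ < s`, and `b ∈ ℂ`, `b ≠ 0`, with
`g(w) = (Re(e^{-(s-2λ)w/2} b), Im(e^{-(s-2λ)w/2} b))ᵀ`, the matrix `∫_0^∞ g(w) g(w)ᵀ dw`
is strictly positive definite; equivalently, for every `(a,β) ≠ 0`,
`∫_0^∞ (Re((a - iβ) e^{-(s-2λ)w/2} b))² dw > 0`. -/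
theorem stmt8 (lam : ℂ) (him : lam.im ≠ 0) (s : ℝ) (hs : 2 * lam.re < s)
    (b : ℂ) (hb : b ≠ 0) :
    Matrix.PosDef
      !![∫ w in Set.Ioi (0:ℝ), ((Complex.exp (-(((s : ℂ) - 2 * lam) * w / 2)) * b).re) ^ 2,
         ∫ w in Set.Ioi (0:ℝ), (Complex.exp (-(((s : ℂ) - 2 * lam) * w / 2)) * b).re *
           (Complex.exp (-(((s : ℂ) - 2 * lam) * w / 2)) * b).im;
         ∫ w in Set.Ioi (0:ℝ), (Complex.exp (-(((s : ℂ) - 2 * lam) * w / 2)) * b).re *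
           (Complex.exp (-(((s : ℂ) - 2 * lam) * w / 2)) * b).im,
         ∫ w in Set.Ioi (0:ℝ), ((Complex.exp (-(((s : ℂ) - 2 * lam) * w / 2)) * b).im) ^ 2] ∧
    ∀ a β : ℝ, ¬ (a = 0 ∧ β = 0) →
      0 < ∫ w in Set.Ioi (0:ℝ),
        ((((a : ℂ) - (β : ℂ) * Complex.I) *
          Complex.exp (-(((s : ℂ) - 2 * lam) * w / 2)) * b).re) ^ 2 := by
  set μ : ℂ := ((s/2 : ℝ) : ℂ) - lam with hμdef
  have hre : 0 < μ.re := by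
    rw [hμdef]; simp [Complex.sub_re]; linarith
  have him' : μ.im ≠ 0 := by
    rw [hμdef]; simpa using him
  have hμw : ∀ w : ℝ, -(((s:ℂ) - 2*lam)*w/2) = -(μ*w) := by
    intro w; rw [hμdef]; push_cast; ring
  simp only [hμw]
  have e1 : ∀ w : ℝ, Complex.exp (-(μ*w)) * b = b * Complex.exp (-(μ*w)) :=
    fun w => mul_comm _ _
  simp only [e1]
  have him_eq : ∀ w : ℝ, ((-Complex.I*b) * Complex.exp (-(μ*w))).re
      = (b * Complex.exp (-(μ*w))).im := by
    intro w; simp [Complex.mul_re, Complex.mul_im]; try ring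
  -- integrabilities
  have h1 : IntegrableOn (fun w : ℝ => (b * Complex.exp (-(μ*w))).re
      * (b * Complex.exp (-(μ*w))).re) (Set.Ioi 0) := aux_int μ hre b b
  have h2 : IntegrableOn (fun w : ℝ => (b * Complex.exp (-(μ*w))).re
      * (b * Complex.exp (-(μ*w))).im) (Set.Ioi 0) := by
    have := aux_int μ hre b (-Complex.I*b)
    simpa only [him_eq] using this
  have h3 : IntegrableOn (fun w : ℝ => (b * Complex.exp (-(μ*w))).im
      * (b * Complex.exp (-(μ*w))).im) (Set.Ioi 0) := by
    have := aux_int μ hre (-Complex.I*b) (-Complex.I*b)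
    simpa only [him_eq] using this
  constructor
  · -- PosDef
    set A := ∫ w in Set.Ioi (0:ℝ), ((b * Complex.exp (-(μ*w))).re)^2 with hA
    set B := ∫ w in Set.Ioi (0:ℝ), (b * Complex.exp (-(μ*w))).re
      * (b * Complex.exp (-(μ*w))).im with hB
    set C := ∫ w in Set.Ioi (0:ℝ), ((b * Complex.exp (-(μ*w))).im)^2 with hC
    constructor
    · show Matrix.conjTranspose !![A, B; B, C] = !![A, B; B, C]
      ext i j
      fin_cases i <;> fin_cases j <;> simp [Matrix.conjTranspose_apply]
    · intro x hx
      set c : ℂ := ((x 0 : ℝ) - (x 1 : ℝ) * Complex.I) * b with hcdef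
      have hc : c ≠ 0 := by
        rw [hcdef]
        apply mul_ne_zero _ hb
        intro hzero
        apply hx
        have hre0 : ((x 0 : ℂ) - (x 1 : ℂ) * Complex.I).re = 0 := by rw [hzero]; simp
        have him0 : ((x 0 : ℂ) - (x 1 : ℂ) * Complex.I).im = 0 := by rw [hzero]; simp
        simp at hre0 him0
        ext i
        fin_cases i <;> simp [hre0, him0]
      have hpos := aux_pos μ hre him' c hc
      have key : ∀ w : ℝ, (c * Complex.exp (-(μ*w))).re
          = x 0 * (b * Complex.exp (-(μ*w))).re + x 1 * (b * Complex.exp (-(μ*w))).im := by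
        intro w
        rw [hcdef, mul_assoc]
        simp [Complex.mul_re, Complex.mul_im]
        try ring
      have hcalc : (∫ w in Set.Ioi (0:ℝ), ((c * Complex.exp (-(μ*w))).re)^2)
          = (x 0)^2 * A + ((2 * x 0 * x 1) * B + (x 1)^2 * C) := by
        rw [show (fun w : ℝ => ((c * Complex.exp (-(μ*w))).re)^2)
            = (fun w : ℝ => (x 0)^2 * ((b * Complex.exp (-(μ*w))).re * (b * Complex.exp (-(μ*w))).re)
              + ((2 * x 0 * x 1) * ((b * Complex.exp (-(μ*w))).re * (b * Complex.exp (-(μ*w))).im)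
                + (x 1)^2 * ((b * Complex.exp (-(μ*w))).im * (b * Complex.exp (-(μ*w))).im)))
          from funext fun w => by rw [key w]; ring]
        have ha : IntegrableOn (fun w : ℝ => (x 0)^2 * ((b * Complex.exp (-(μ*w))).re * (b * Complex.exp (-(μ*w))).re)) (Set.Ioi 0) := h1.const_mul _
        have hb' : IntegrableOn (fun w : ℝ => (2 * x 0 * x 1) * ((b * Complex.exp (-(μ*w))).re * (b * Complex.exp (-(μ*w))).im)) (Set.Ioi 0) := h2.const_mul _
        have hc' : IntegrableOn (fun w : ℝ => (x 1)^2 * ((b * Complex.exp (-(μ*w))).im * (b * Complex.exp (-(μ*w))).im)) (Set.Ioi 0) := h3.const_mul _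
        have hbc : IntegrableOn (fun w : ℝ => (2 * x 0 * x 1) * ((b * Complex.exp (-(μ*w))).re * (b * Complex.exp (-(μ*w))).im) + (x 1)^2 * ((b * Complex.exp (-(μ*w))).im * (b * Complex.exp (-(μ*w))).im)) (Set.Ioi 0) := hb'.add hc'
        rw [integral_add ha hbc, integral_add hb' hc',
          integral_const_mul, integral_const_mul, integral_const_mul]
        rw [hA, hB, hC]
        simp only [sq]
      rw [hcalc] at hpos
      have hgoal : (x.sum fun i xi ↦ x.sum fun j xj ↦ star xi * !![A, B; B, C] i j * xj)
          = x 0 * (A * x 0 + B * x 1) + x 1 * (B * x 0 + C * x 1) := by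
        simp [Finsupp.sum_fintype, Fin.sum_univ_two]
        ring
      rw [hgoal]
      nlinarith [hpos]
  · -- second clause
    intro a β hab
    set c : ℂ := ((a : ℂ) - (β : ℂ) * Complex.I) * b with hcdef
    have hc : c ≠ 0 := by
      rw [hcdef]
      apply mul_ne_zero _ hb
      intro hzero
      apply hab
      have hre0 : ((a : ℂ) - (β : ℂ) * Complex.I).re = 0 := by rw [hzero]; simp
      have him0 : ((a : ℂ) - (β : ℂ) * Complex.I).im = 0 := by rw [hzero]; simp
      simp at hre0 him0
      exact ⟨hre0, him0⟩
    have : ∀ w : ℝ, ((a : ℂ) - (β : ℂ) * Complex.I) * Complex.exp (-(μ*w)) * b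
        = c * Complex.exp (-(μ*w)) := fun w => by rw [hcdef]; ring
    simp only [this]
    exact aux_pos μ hre him' c hc
end

section
/- Let d ∈ ℕ, let λ ∈ ℂ with Im(λ) ≠ 0, let s ∈ ℝ with 2Re(λ) < s, let v ∈ ℂ^d, and let μ be a Borel measure on U_d := [0,∞)^d∖{0} with ∫_{U_d}‖z‖² μ(dz) < ∞ and μ({z ∈ U_d : ⟨v,z⟩ ≠ 0}) > 0. For w ≥ 0 and z ∈ U_d set g_z(w) := (Re(e^{−(s−2λ)w/2} ⟨v,z⟩), Im(e^{−(s−2λ)w/2} ⟨v,z⟩))^⊤ ∈ ℝ². Then the 2×2 real matrix ∫_0^∞ ∫_{U_d} g_z(w) g_z(w)^⊤ μ(dz) dw is strictly positive definite. -/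
open MeasureTheory Set Matrix
open scoped ENNReal

/-- The pairing `⟨v,z⟩ = ∑ j, v j * z j` of `v ∈ ℂ^d` with `z ∈ ℝ^d`. -/
noncomputable def pairCV {d : ℕ} (v : Fin d → ℂ) (z : Fin d → ℝ) : ℂ :=
  ∑ j, v j * (z j : ℂ)

lemma int_bilin {X : Type*} [MeasurableSpace X] (μ : Measure X) (f g : X → ℝ)
    (hff : Integrable (fun z => f z * f z) μ) (hfg : Integrable (fun z => f z * g z) μ)
    (hgg : Integrable (fun z => g z * g z) μ) (α β γ δ : ℝ) :
    ∫ z, (α * f z + β * g z) * (γ * f z + δ * g z) ∂μ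
      = α * γ * ∫ z, f z * f z ∂μ + (α * δ + β * γ) * ∫ z, f z * g z ∂μ
        + β * δ * ∫ z, g z * g z ∂μ := by
  have h : (fun z => (α * f z + β * g z) * (γ * f z + δ * g z))
      = fun z => α * γ * (f z * f z) + ((α * δ + β * γ) * (f z * g z) + β * δ * (g z * g z)) := by
    funext z; ring
  have i1 : Integrable (fun z => α * γ * (f z * f z)) μ := hff.const_mul _
  have i2 : Integrable (fun z => (α * δ + β * γ) * (f z * g z)) μ := hfg.const_mul _
  have i3 : Integrable (fun z => β * δ * (g z * g z)) μ := hgg.const_mul _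
  have i23 : Integrable (fun z => (α * δ + β * γ) * (f z * g z) + β * δ * (g z * g z)) μ := i2.add i3
  rw [h, integral_add i1 i23, integral_add i2 i3,
      integral_const_mul, integral_const_mul, integral_const_mul]
  ring

lemma int_bilin_integrable {X : Type*} [MeasurableSpace X] (μ : Measure X) (f g : X → ℝ)
    (hff : Integrable (fun z => f z * f z) μ) (hfg : Integrable (fun z => f z * g z) μ)
    (hgg : Integrable (fun z => g z * g z) μ) (α β γ δ : ℝ) :
    Integrable (fun z => (α * f z + β * g z) * (γ * f z + δ * g z)) μ := by
  have h : (fun z => (α * f z + β * g z) * (γ * f z + δ * g z))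
      = fun z => α * γ * (f z * f z) + ((α * δ + β * γ) * (f z * g z) + β * δ * (g z * g z)) := by
    funext z; ring
  rw [h]
  exact (hff.const_mul _).add ((hfg.const_mul _).add (hgg.const_mul _))

-- determinant lemma
lemma det_zero_of_orth (a b : ℝ) (hab : a ≠ 0 ∨ b ≠ 0) (η₁ η₂ : ℂ)
    (h1 : a * η₁.re + b * η₁.im = 0) (h2 : a * η₂.re + b * η₂.im = 0) :
    ((starRingEnd ℂ) η₁ * η₂).im = 0 := by
  have hgoal : ((starRingEnd ℂ) η₁ * η₂).im = η₁.re * η₂.im - η₁.im * η₂.re := by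
    simp [Complex.mul_im]; ring
  rw [hgoal]
  rcases hab with ha | hb
  · have : a * (η₁.re * η₂.im - η₁.im * η₂.re) = 0 := by linear_combination η₂.im * h1 - η₁.im * h2
    exact (mul_eq_zero.mp this).resolve_left ha
  · have : b * (η₁.re * η₂.im - η₁.im * η₂.re) = 0 := by linear_combination (-η₂.re) * h1 + η₁.re * h2
    exact (mul_eq_zero.mp this).resolve_left hb

lemma posdef_aux {X : Type*} [MeasurableSpace X] (μ : Measure X)
    (e : ℝ → ℂ) (p : X → ℂ) (ε : ℝ) (hε : 0 < ε)
    (hec : Continuous e)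
    (heb : ∀ w : ℝ, ‖e w‖ ≤ Real.exp (-(ε * w)))
    (hpm : AEStronglyMeasurable p μ)
    (hpint : Integrable (fun z => ‖p z‖ ^ 2) μ)
    (hpos : 0 < μ {z | p z ≠ 0})
    (hcount : ∀ w₁ : ℝ, Set.Countable {w₂ : ℝ | ((starRingEnd ℂ) (e w₁) * e w₂).im = 0}) :
    Matrix.PosDef
      !![∫ w in Set.Ioi (0:ℝ), ∫ z, ((e w * p z).re) ^ 2 ∂μ,
         ∫ w in Set.Ioi (0:ℝ), ∫ z, (e w * p z).re * (e w * p z).im ∂μ;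
         ∫ w in Set.Ioi (0:ℝ), ∫ z, (e w * p z).re * (e w * p z).im ∂μ,
         ∫ w in Set.Ioi (0:ℝ), ∫ z, ((e w * p z).im) ^ 2 ∂μ] := by
  have hprm : AEStronglyMeasurable (fun z => (p z).re) μ :=
    Complex.continuous_re.comp_aestronglyMeasurable hpm
  have hpim : AEStronglyMeasurable (fun z => (p z).im) μ :=
    Complex.continuous_im.comp_aestronglyMeasurable hpm
  have habs_re : ∀ z, |(p z).re| ≤ ‖p z‖ := fun z => Complex.abs_re_le_norm _
  have habs_im : ∀ z, |(p z).im| ≤ ‖p z‖ := fun z => Complex.abs_im_le_norm _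
  have hmono2 : ∀ (u₁ u₂ : X → ℝ), AEStronglyMeasurable u₁ μ → AEStronglyMeasurable u₂ μ →
      (∀ z, |u₁ z| ≤ ‖p z‖) → (∀ z, |u₂ z| ≤ ‖p z‖) →
      Integrable (fun z => u₁ z * u₂ z) μ := by
    intro u₁ u₂ hm1 hm2 hb1 hb2
    refine hpint.mono (hm1.mul hm2) (Filter.Eventually.of_forall fun z => ?_)
    rw [Real.norm_eq_abs, abs_mul, Real.norm_eq_abs,
        abs_of_nonneg (by positivity : (0:ℝ) ≤ ‖p z‖ ^ 2), sq]
    exact mul_le_mul (hb1 z) (hb2 z) (abs_nonneg _) (norm_nonneg _)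
  have hprpr : Integrable (fun z => (p z).re * (p z).re) μ :=
    hmono2 _ _ hprm hprm habs_re habs_re
  have hprpi : Integrable (fun z => (p z).re * (p z).im) μ :=
    hmono2 _ _ hprm hpim habs_re habs_im
  have hpipi : Integrable (fun z => (p z).im * (p z).im) μ :=
    hmono2 _ _ hpim hpim habs_im habs_im
  set P : ℝ := ∫ z, (p z).re * (p z).re ∂μ with hP
  set Q : ℝ := ∫ z, (p z).re * (p z).im ∂μ with hQ
  set R : ℝ := ∫ z, (p z).im * (p z).im ∂μ with hR
  -- inner integral formulas, in canonical basis form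
  have hA : ∀ w : ℝ, ∫ z, ((e w * p z).re) ^ 2 ∂μ
      = (e w).re * (e w).re * P + (e w).re * (e w).im * (-2 * Q)
        + (e w).im * (e w).im * R := by
    intro w
    have hfun : (fun z => ((e w * p z).re) ^ 2)
        = fun z => ((e w).re * (p z).re + (-(e w).im) * (p z).im)
            * ((e w).re * (p z).re + (-(e w).im) * (p z).im) := by
      funext z; rw [Complex.mul_re]; ring
    rw [hfun, int_bilin μ _ _ hprpr hprpi hpipi]; ring
  have hB : ∀ w : ℝ, ∫ z, (e w * p z).re * (e w * p z).im ∂μ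
      = (e w).re * (e w).re * Q + (e w).re * (e w).im * (P - R)
        + (e w).im * (e w).im * (-Q) := by
    intro w
    have hfun : (fun z => (e w * p z).re * (e w * p z).im)
        = fun z => ((e w).re * (p z).re + (-(e w).im) * (p z).im)
            * ((e w).im * (p z).re + (e w).re * (p z).im) := by
      funext z; rw [Complex.mul_re, Complex.mul_im]; ring
    rw [hfun, int_bilin μ _ _ hprpr hprpi hpipi]; ring
  have hC : ∀ w : ℝ, ∫ z, ((e w * p z).im) ^ 2 ∂μ
      = (e w).re * (e w).re * R + (e w).re * (e w).im * (2 * Q)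
        + (e w).im * (e w).im * P := by
    intro w
    have hfun : (fun z => ((e w * p z).im) ^ 2)
        = fun z => ((e w).im * (p z).re + (e w).re * (p z).im)
            * ((e w).im * (p z).re + (e w).re * (p z).im) := by
      funext z; rw [Complex.mul_im]; ring
    rw [hfun, int_bilin μ _ _ hprpr hprpi hpipi]; ring
  -- outer basis integrability
  have hbre : ∀ w : ℝ, |(e w).re| ≤ Real.exp (-(ε * w)) :=
    fun w => (Complex.abs_re_le_norm _).trans (heb w)
  have hbim : ∀ w : ℝ, |(e w).im| ≤ Real.exp (-(ε * w)) :=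
    fun w => (Complex.abs_im_le_norm _).trans (heb w)
  have hcre : Continuous fun w => (e w).re := Complex.continuous_re.comp hec
  have hcim : Continuous fun w => (e w).im := Complex.continuous_im.comp hec
  have hE : IntegrableOn (fun w => Real.exp (-(ε * w)) * Real.exp (-(ε * w))) (Set.Ioi 0) volume := by
    have h : (fun w : ℝ => Real.exp (-(ε * w)) * Real.exp (-(ε * w)))
        = fun w : ℝ => Real.exp (-(2 * ε) * w) := by
      funext w; rw [← Real.exp_add]; ring_nf
    rw [h]
    exact exp_neg_integrableOn_Ioi 0 (by linarith)
  have hmonoW : ∀ u₁ u₂ : ℝ → ℝ, Continuous u₁ → Continuous u₂ →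
      (∀ w, |u₁ w| ≤ Real.exp (-(ε * w))) → (∀ w, |u₂ w| ≤ Real.exp (-(ε * w))) →
      IntegrableOn (fun w => u₁ w * u₂ w) (Set.Ioi 0) volume := by
    intro u₁ u₂ hc1 hc2 hb1 hb2
    refine Integrable.mono hE ((hc1.mul hc2).aestronglyMeasurable)
      (Filter.Eventually.of_forall fun w => ?_)
    rw [Real.norm_eq_abs, abs_mul, Real.norm_eq_abs,
        abs_of_nonneg (mul_nonneg (Real.exp_nonneg _) (Real.exp_nonneg _))]
    exact mul_le_mul (hb1 w) (hb2 w) (abs_nonneg _) (Real.exp_nonneg _)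
  have h11 : IntegrableOn (fun w => (e w).re * (e w).re) (Set.Ioi 0) volume :=
    hmonoW _ _ hcre hcre hbre hbre
  have h12 : IntegrableOn (fun w => (e w).re * (e w).im) (Set.Ioi 0) volume :=
    hmonoW _ _ hcre hcim hbre hbim
  have h22 : IntegrableOn (fun w => (e w).im * (e w).im) (Set.Ioi 0) volume :=
    hmonoW _ _ hcim hcim hbim hbim
  have hcomb : ∀ c1 c2 c3 : ℝ, IntegrableOn
      (fun w => (e w).re * (e w).re * c1 + (e w).re * (e w).im * c2 + (e w).im * (e w).im * c3)
      (Set.Ioi 0) volume := by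
    intro c1 c2 c3
    exact ((h11.mul_const c1).add (h12.mul_const c2)).add (h22.mul_const c3)
  set I1 : ℝ := ∫ w in Set.Ioi (0:ℝ), (e w).re * (e w).re with hI1
  set I2 : ℝ := ∫ w in Set.Ioi (0:ℝ), (e w).re * (e w).im with hI2
  set I3 : ℝ := ∫ w in Set.Ioi (0:ℝ), (e w).im * (e w).im with hI3
  have hsplitint : ∀ c1 c2 c3 : ℝ, ∫ w in Set.Ioi (0:ℝ),
      ((e w).re * (e w).re * c1 + (e w).re * (e w).im * c2 + (e w).im * (e w).im * c3)
      = I1 * c1 + I2 * c2 + I3 * c3 := by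
    intro c1 c2 c3
    have i1 : IntegrableOn (fun w => (e w).re * (e w).re * c1) (Set.Ioi 0) volume :=
      h11.mul_const c1
    have i2 : IntegrableOn (fun w => (e w).re * (e w).im * c2) (Set.Ioi 0) volume :=
      h12.mul_const c2
    have i3 : IntegrableOn (fun w => (e w).im * (e w).im * c3) (Set.Ioi 0) volume :=
      h22.mul_const c3
    have i12 : IntegrableOn (fun w => (e w).re * (e w).re * c1 + (e w).re * (e w).im * c2)
        (Set.Ioi 0) volume := i1.add i2
    rw [integral_add i12 i3, integral_add i1 i2,
        integral_mul_const, integral_mul_const, integral_mul_const, hI1, hI2, hI3]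
  set Mre : ℝ := ∫ w in Set.Ioi (0:ℝ), ∫ z, ((e w * p z).re) ^ 2 ∂μ with hMre
  set Mmix : ℝ := ∫ w in Set.Ioi (0:ℝ), ∫ z, (e w * p z).re * (e w * p z).im ∂μ with hMmix
  set Mim : ℝ := ∫ w in Set.Ioi (0:ℝ), ∫ z, ((e w * p z).im) ^ 2 ∂μ with hMim
  have hMreval : Mre = I1 * P + I2 * (-2 * Q) + I3 * R := by
    rw [hMre]; simp only [hA]; exact hsplitint _ _ _
  have hMmixval : Mmix = I1 * Q + I2 * (P - R) + I3 * (-Q) := by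
    rw [hMmix]; simp only [hB]; exact hsplitint _ _ _
  have hMimval : Mim = I1 * R + I2 * (2 * Q) + I3 * P := by
    rw [hMim]; simp only [hC]; exact hsplitint _ _ _
  rw [Matrix.posDef_iff_dotProduct_mulVec]
  constructor
  · unfold Matrix.IsHermitian
    ext i j
    fin_cases i <;> fin_cases j <;> simp
  intro x hx
  set a : ℝ := x 0 with ha
  set b : ℝ := x 1 with hb
  have hab : a ≠ 0 ∨ b ≠ 0 := by
    by_contra h
    push_neg at h
    exact hx (funext fun i => by fin_cases i <;> simp [← ha, ← hb, h.1, h.2])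
  set G : ℝ → ℝ := fun w => ∫ z, (a * (e w * p z).re + b * (e w * p z).im) ^ 2 ∂μ with hGdef
  have hfunG : ∀ w : ℝ, (fun z => (a * (e w * p z).re + b * (e w * p z).im) ^ 2)
      = fun z => ((a * (e w).re + b * (e w).im) * (p z).re + (b * (e w).re - a * (e w).im) * (p z).im)
          * ((a * (e w).re + b * (e w).im) * (p z).re + (b * (e w).re - a * (e w).im) * (p z).im) := by
    intro w; funext z; rw [Complex.mul_re, Complex.mul_im]; ring
  have hGform : ∀ w : ℝ, G w
      = (e w).re * (e w).re * (a * a * P + 2 * (a * b) * Q + b * b * R)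
        + (e w).re * (e w).im * (2 * (a * b) * P + 2 * (b * b - a * a) * Q - 2 * (a * b) * R)
        + (e w).im * (e w).im * (b * b * P - 2 * (a * b) * Q + a * a * R) := by
    intro w
    simp only [hGdef]
    have hfun2 : (fun z => (a * (e w * p z).re + b * (e w * p z).im) ^ 2)
        = fun z => ((a * (e w).re + b * (e w).im) * (p z).re + (b * (e w).re - a * (e w).im) * (p z).im)
            * ((a * (e w).re + b * (e w).im) * (p z).re + (b * (e w).re - a * (e w).im) * (p z).im) :=
      hfunG w
    rw [hfun2, int_bilin μ _ _ hprpr hprpi hpipi]; ring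
  have hGint : IntegrableOn G (Set.Ioi 0) volume :=
    (hcomb _ _ _).congr (Filter.Eventually.of_forall fun w => (hGform w).symm)
  have hGnn : ∀ w, 0 ≤ G w := by
    intro w
    simp only [hGdef]
    exact integral_nonneg fun z => sq_nonneg _
  have hsqint : ∀ w : ℝ, Integrable (fun z => (a * (e w * p z).re + b * (e w * p z).im) ^ 2) μ := by
    intro w
    rw [hfunG w]
    exact int_bilin_integrable μ _ _ hprpr hprpi hpipi _ _ _ _
  have hzero : ∀ w₁ w₂ : ℝ, G w₁ = 0 → G w₂ = 0 → ((starRingEnd ℂ) (e w₁) * e w₂).im = 0 := by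
    intro w₁ w₂ h1 h2
    have hae : ∀ w : ℝ, G w = 0 → ∀ᵐ z ∂μ, a * (e w * p z).re + b * (e w * p z).im = 0 := by
      intro w hw
      simp only [hGdef] at hw
      have h0 := (integral_eq_zero_iff_of_nonneg (fun z => sq_nonneg _) (hsqint w)).mp hw
      filter_upwards [h0] with z hz
      exact pow_eq_zero_iff two_ne_zero |>.mp hz
    have hae1 := hae w₁ h1
    have hae2 := hae w₂ h2
    set N : Set X := {z | ¬ (a * (e w₁ * p z).re + b * (e w₁ * p z).im = 0
        ∧ a * (e w₂ * p z).re + b * (e w₂ * p z).im = 0)} with hN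
    have hNnull : μ N = 0 := ae_iff.mp (hae1.and hae2)
    have hnonempty : ({z | p z ≠ 0} \ N).Nonempty := by
      by_contra hcon
      rw [Set.not_nonempty_iff_eq_empty, Set.diff_eq_empty] at hcon
      exact absurd (measure_mono_null hcon hNnull) (ne_of_gt hpos)
    obtain ⟨z, hz, hzN⟩ := hnonempty
    simp only [hN, Set.mem_setOf_eq, not_not] at hzN
    obtain ⟨hz1, hz2⟩ := hzN
    have hd := det_zero_of_orth a b hab _ _ hz1 hz2
    have hfactor : (starRingEnd ℂ) (e w₁ * p z) * (e w₂ * p z)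
        = ((starRingEnd ℂ) (e w₁) * e w₂) * ((Complex.normSq (p z) : ℝ) : ℂ) := by
      rw [_root_.map_mul, Complex.normSq_eq_conj_mul_self]; ring
    rw [hfactor] at hd
    have him0 : (((starRingEnd ℂ) (e w₁) * e w₂) * ((Complex.normSq (p z) : ℝ) : ℂ)).im
        = ((starRingEnd ℂ) (e w₁) * e w₂).im * Complex.normSq (p z) := by
      rw [Complex.mul_im]; simp
    rw [him0] at hd
    rcases mul_eq_zero.mp hd with h | h
    · exact h
    · exact absurd (Complex.normSq_eq_zero.mp h) hz
  have hZ0 : volume {w : ℝ | G w = 0} = 0 := by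
    rcases Set.eq_empty_or_nonempty {w : ℝ | G w = 0} with hZ | ⟨w₁, hw₁⟩
    · rw [hZ]; exact measure_empty
    · exact measure_mono_null (fun w₂ hw₂ => hzero w₁ w₂ hw₁ hw₂) ((hcount w₁).measure_zero _)
  have hposint : 0 < ∫ w in Set.Ioi (0:ℝ), G w := by
    rw [setIntegral_pos_iff_support_of_nonneg_ae
      (Filter.Eventually.of_forall hGnn) hGint]
    have hsub2 : Set.Ioi (0:ℝ) \ {w | G w = 0} ⊆ Function.support G ∩ Set.Ioi 0 :=
      fun w hw => ⟨fun h0 => hw.2 h0, hw.1⟩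
    calc (0:ℝ≥0∞) < volume (Set.Ioi (0:ℝ) \ {w | G w = 0}) := by
          rw [measure_diff_null hZ0, Real.volume_Ioi]
          exact ENNReal.zero_lt_top
      _ ≤ volume (Function.support G ∩ Set.Ioi 0) := measure_mono hsub2
  have hsplit : ∫ w in Set.Ioi (0:ℝ), G w = a * a * Mre + 2 * (a * b) * Mmix + b * b * Mim := by
    rw [hMreval, hMmixval, hMimval]
    calc ∫ w in Set.Ioi (0:ℝ), G w
        = ∫ w in Set.Ioi (0:ℝ),
            ((e w).re * (e w).re * (a * a * P + 2 * (a * b) * Q + b * b * R)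
              + (e w).re * (e w).im * (2 * (a * b) * P + 2 * (b * b - a * a) * Q - 2 * (a * b) * R)
              + (e w).im * (e w).im * (b * b * P - 2 * (a * b) * Q + a * a * R)) := by
          simp only [hGform]
      _ = _ := by rw [hsplitint]; ring
  have hqf : star x ⬝ᵥ (!![Mre, Mmix; Mmix, Mim] *ᵥ x)
      = a * a * Mre + 2 * (a * b) * Mmix + b * b * Mim := by
    simp [Matrix.mulVec, dotProduct, Fin.sum_univ_two, ← ha, ← hb]
    ring
  rw [hqf, ← hsplit]
  exact hposint
/-- Let `λ ∈ ℂ` with `Im λ ≠ 0`, `s ∈ ℝ` with `2 Re λ < s`, `v ∈ ℂ^d`, and let `μ` be a Borel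
measure on `U_d = [0,∞)^d \ {0}` with `∫ ‖z‖² dμ < ∞` and `μ{z ∈ U_d : ⟨v,z⟩ ≠ 0} > 0`.
With `g_z(w) = (Re(e^{-(s-2λ)w/2} ⟨v,z⟩), Im(e^{-(s-2λ)w/2} ⟨v,z⟩))ᵀ`, the matrix
`∫_0^∞ ∫_{U_d} g_z(w) g_z(w)ᵀ μ(dz) dw` is strictly positive definite. -/
theorem stmt9 (d : ℕ) (lam : ℂ) (him : lam.im ≠ 0) (s : ℝ) (hs : 2 * lam.re < s)
    (v : Fin d → ℂ) (μ : Measure (Fin d → ℝ))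
    (hsupp : μ {z | ¬ ((∀ i, 0 ≤ z i) ∧ z ≠ 0)} = 0)
    (hmom : ∫⁻ z, (‖z‖₊ : ℝ≥0∞) ^ 2 ∂μ < ⊤)
    (hpos : 0 < μ {z | ((∀ i, 0 ≤ z i) ∧ z ≠ 0) ∧ pairCV v z ≠ 0}) :
    Matrix.PosDef
      !![∫ w in Set.Ioi (0:ℝ),
           ∫ z, ((Complex.exp (-(((s : ℂ) - 2 * lam) * w / 2)) * pairCV v z).re) ^ 2 ∂μ,
         ∫ w in Set.Ioi (0:ℝ),
           ∫ z, (Complex.exp (-(((s : ℂ) - 2 * lam) * w / 2)) * pairCV v z).re *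
             (Complex.exp (-(((s : ℂ) - 2 * lam) * w / 2)) * pairCV v z).im ∂μ;
         ∫ w in Set.Ioi (0:ℝ),
           ∫ z, (Complex.exp (-(((s : ℂ) - 2 * lam) * w / 2)) * pairCV v z).re *
             (Complex.exp (-(((s : ℂ) - 2 * lam) * w / 2)) * pairCV v z).im ∂μ,
         ∫ w in Set.Ioi (0:ℝ),
           ∫ z, ((Complex.exp (-(((s : ℂ) - 2 * lam) * w / 2)) * pairCV v z).im) ^ 2 ∂μ] := by
  have hε : 0 < (s - 2 * lam.re) / 2 := by linarith
  have hre : ∀ w : ℝ, (-(((s : ℂ) - 2 * lam) * w / 2)).re = -((s - 2 * lam.re) / 2 * w) := by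
    intro w; simp [Complex.div_re, Complex.mul_re, Complex.normSq]; ring
  have him2 : ∀ w : ℝ, (-(((s : ℂ) - 2 * lam) * w / 2)).im = lam.im * w := by
    intro w; simp [Complex.div_im, Complex.mul_im, Complex.normSq]; ring
  have hpc : Continuous (pairCV v) := by
    unfold pairCV
    exact continuous_finset_sum _ fun j _ =>
      continuous_const.mul (Complex.continuous_ofReal.comp (continuous_apply j))
  have hCb : ∀ z : Fin d → ℝ, ‖pairCV v z‖ ≤ (∑ j, ‖v j‖) * ‖z‖ := by
    intro z
    unfold pairCV
    calc ‖∑ j, v j * (z j : ℂ)‖ ≤ ∑ j, ‖v j * (z j : ℂ)‖ := norm_sum_le _ _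
      _ ≤ ∑ j, ‖v j‖ * ‖z‖ := by
          refine Finset.sum_le_sum fun j _ => ?_
          rw [norm_mul, Complex.norm_real]
          exact mul_le_mul_of_nonneg_left ((norm_le_pi_norm z j)) (norm_nonneg _)
      _ = (∑ j, ‖v j‖) * ‖z‖ := by rw [Finset.sum_mul]
  have hz2 : Integrable (fun z : Fin d → ℝ => ‖z‖ ^ 2) μ := by
    refine ⟨(continuous_norm.pow 2).aestronglyMeasurable, ?_⟩
    have hnn : ∀ z : Fin d → ℝ, (‖(‖z‖ ^ 2 : ℝ)‖₊ : ℝ≥0∞) = (‖z‖₊ : ℝ≥0∞) ^ 2 := by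
      intro z; rw [nnnorm_pow, nnnorm_norm]; push_cast; ring
    unfold HasFiniteIntegral
    calc ∫⁻ z, (‖(‖z‖ ^ 2 : ℝ)‖₊ : ℝ≥0∞) ∂μ = ∫⁻ z, (‖z‖₊ : ℝ≥0∞) ^ 2 ∂μ := by
          exact lintegral_congr fun z => hnn z
      _ < ⊤ := hmom
  have hpint : Integrable (fun z => ‖pairCV v z‖ ^ 2) μ := by
    refine Integrable.mono (hz2.const_mul ((∑ j, ‖v j‖) ^ 2))
      ((hpc.norm.pow 2).aestronglyMeasurable) (Filter.Eventually.of_forall fun z => ?_)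
    rw [Real.norm_eq_abs, Real.norm_eq_abs, abs_of_nonneg (by positivity : (0:ℝ) ≤ ‖pairCV v z‖ ^ 2),
        abs_of_nonneg (by positivity : (0:ℝ) ≤ (∑ j, ‖v j‖) ^ 2 * ‖z‖ ^ 2)]
    calc ‖pairCV v z‖ ^ 2 ≤ ((∑ j, ‖v j‖) * ‖z‖) ^ 2 := by
          refine pow_le_pow_left₀ (norm_nonneg _) (hCb z) 2
      _ = (∑ j, ‖v j‖) ^ 2 * ‖z‖ ^ 2 := by ring
  refine posdef_aux μ (fun w => Complex.exp (-(((s : ℂ) - 2 * lam) * w / 2))) (pairCV v)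
    ((s - 2 * lam.re) / 2) hε ?_ ?_ hpc.aestronglyMeasurable hpint ?_ ?_
  · exact Complex.continuous_exp.comp
      (((continuous_const.mul Complex.continuous_ofReal).div_const 2).neg)
  · intro w
    rw [Complex.norm_exp, hre w]
  · exact lt_of_lt_of_le hpos (measure_mono fun z hz => hz.2)
  · intro w₁
    refine Set.Countable.mono ?_ (Set.countable_range fun n : ℤ => w₁ + n * Real.pi / lam.im)
    intro w₂ hw₂
    simp only [Set.mem_setOf_eq] at hw₂
    rw [← Complex.exp_conj, ← Complex.exp_add, Complex.exp_im] at hw₂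
    have hsin : Real.sin (((starRingEnd ℂ) (-(((s : ℂ) - 2 * lam) * w₁ / 2))
        + -(((s : ℂ) - 2 * lam) * w₂ / 2)).im) = 0 := by
      rcases mul_eq_zero.mp hw₂ with h | h
      · exact absurd h (Real.exp_ne_zero _)
      · exact h
    have himeq : (((starRingEnd ℂ) (-(((s : ℂ) - 2 * lam) * w₁ / 2))
        + -(((s : ℂ) - 2 * lam) * w₂ / 2)).im) = lam.im * (w₂ - w₁) := by
      rw [Complex.add_im, Complex.conj_im, him2, him2]; ring
    rw [himeq] at hsin
    obtain ⟨n, hn⟩ := Real.sin_eq_zero_iff.mp hsin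
    refine ⟨n, ?_⟩
    field_simp
    linarith [hn]
end

section
/- Let d ∈ ℕ, B ∈ ℝ^{d×d}, s ∈ ℝ, Π ∈ ℝ^{d×d}, and suppose there exist constants C₁, C₂ ∈ (0,∞) such that ‖e^{−su}e^{uB} − Π‖ ≤ C₁e^{−C₂u} for all u ≥ 0, where e^{uB} is the matrix exponential. Let λ ∈ ℂ with Re(λ) = s/2 and Im(λ) ≠ 0. Then, viewing matrices as complex matrices, t^{−1}e^{−st}∫_0^t e^{2λ(t−u)} e^{uB} du → 0 as t → ∞ (entrywise convergence in ℂ^{d×d}). -/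
open MeasureTheory Filter

lemma euc_apply_le' (d : ℕ) (v : EuclideanSpace ℝ (Fin d)) (i : Fin d) : |v i| ≤ ‖v‖ := by
  rw [EuclideanSpace.norm_eq]
  calc |v i| = Real.sqrt (‖v i‖^2) := by rw [Real.sqrt_sq_eq_abs]; simp [Real.norm_eq_abs]
    _ ≤ _ := Real.sqrt_le_sqrt (Finset.single_le_sum (fun k _ => sq_nonneg ‖v k‖) (Finset.mem_univ i))

lemma entry_le' (d : ℕ) (A : Matrix (Fin d) (Fin d) ℝ) (i j : Fin d) :
    |A i j| ≤ ‖Matrix.toEuclideanCLM (𝕜 := ℝ) A‖ := by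
  have h := congrFun (Matrix.ofLp_toEuclideanCLM (𝕜 := ℝ) A (EuclideanSpace.single j (1:ℝ))) i
  have h' : (Matrix.toEuclideanCLM (𝕜 := ℝ) A) (EuclideanSpace.single j (1:ℝ)) i = A i j := by
    simpa [Matrix.mulVec_single] using h
  calc |A i j| = |(Matrix.toEuclideanCLM (𝕜 := ℝ) A) (EuclideanSpace.single j (1:ℝ)) i| := by rw [h']
    _ ≤ ‖(Matrix.toEuclideanCLM (𝕜 := ℝ) A) (EuclideanSpace.single j (1:ℝ))‖ := euc_apply_le' _ _ i
    _ ≤ ‖Matrix.toEuclideanCLM (𝕜 := ℝ) A‖ * ‖EuclideanSpace.single j (1:ℝ)‖ :=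
        (Matrix.toEuclideanCLM (𝕜 := ℝ) A).le_opNorm _
    _ = ‖Matrix.toEuclideanCLM (𝕜 := ℝ) A‖ := by
        rw [EuclideanSpace.norm_single, norm_one, mul_one]

lemma cont_entry' (d : ℕ) (B : Matrix (Fin d) (Fin d) ℝ) (i j : Fin d) :
    Continuous fun u : ℝ => (NormedSpace.exp (u • B)) i j := by
  letI : SeminormedRing (Matrix (Fin d) (Fin d) ℝ) := Matrix.linftyOpSemiNormedRing
  letI : NormedRing (Matrix (Fin d) (Fin d) ℝ) := Matrix.linftyOpNormedRing
  letI : NormedAlgebra ℝ (Matrix (Fin d) (Fin d) ℝ) := Matrix.linftyOpNormedAlgebra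
  letI : NormedAlgebra ℚ (Matrix (Fin d) (Fin d) ℝ) := Matrix.linftyOpNormedAlgebra
  exact (NormedSpace.exp_continuous.comp (continuous_id.smul continuous_const)).matrix_elem i j

set_option maxHeartbeats 1000000 in
/-- Let `B ∈ ℝ^{d×d}`, `s ∈ ℝ`, `Π ∈ ℝ^{d×d}`, and suppose
`‖e^{-su} e^{uB} - Π‖ ≤ C₁ e^{-C₂ u}` for all `u ≥ 0` (operator norm induced by the Euclidean
norm), for some `C₁, C₂ > 0`. If `λ ∈ ℂ` with `Re λ = s/2` and `Im λ ≠ 0`, then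
`t⁻¹ e^{-st} ∫_0^t e^{2λ(t-u)} e^{uB} du → 0` as `t → ∞`, entrywise in `ℂ`. -/
theorem stmt17 (d : ℕ) (B : Matrix (Fin d) (Fin d) ℝ) (s : ℝ) (Pi : Matrix (Fin d) (Fin d) ℝ)
    (hdecay : ∃ C₁ C₂ : ℝ, 0 < C₁ ∧ 0 < C₂ ∧ ∀ u : ℝ, 0 ≤ u →
      ‖Matrix.toEuclideanCLM (𝕜 := ℝ)
          (Real.exp (-(s * u)) • NormedSpace.exp (u • B) - Pi)‖ ≤ C₁ * Real.exp (-(C₂ * u)))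
    (lam : ℂ) (hre : lam.re = s / 2) (him : lam.im ≠ 0) :
    ∀ i j : Fin d,
      Tendsto
        (fun t : ℝ => (t : ℂ)⁻¹ * (Complex.exp (-((s : ℂ) * t)) *
          ∫ u in (0:ℝ)..t,
            Complex.exp (2 * lam * ((t : ℂ) - (u : ℂ))) * ((NormedSpace.exp (u • B)) i j : ℂ)))
        atTop (nhds 0) := by
  intro i j
  obtain ⟨C₁, C₂, hC₁, hC₂, hdec⟩ := hdecay
  set θ : ℝ := lam.im with hθdef
  have hθ0 : θ ≠ 0 := him
  have hlam : (2:ℂ) * lam = (s:ℂ) + ((2*θ : ℝ):ℂ) * Complex.I := by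
    have h := Complex.re_add_im lam
    rw [← h, hre]
    push_cast
    ring
  set E : ℝ → ℂ := fun x => Complex.exp (((2*θ*x : ℝ):ℂ) * Complex.I) with hEdef
  set g : ℝ → ℝ := fun u => (Real.exp (-(s*u)) • NormedSpace.exp (u • B) - Pi) i j with hgdef
  have hgeq : ∀ u : ℝ, g u = Real.exp (-(s*u)) * (NormedSpace.exp (u • B)) i j - Pi i j := by
    intro u
    simp [hgdef, Matrix.sub_apply, Matrix.smul_apply, smul_eq_mul]
  have hEcont : Continuous E := by
    apply Complex.continuous_exp.comp
    exact (Complex.continuous_ofReal.comp (continuous_const.mul continuous_id)).mul continuous_const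
  have hgcont : Continuous g := by
    have : g = fun u => Real.exp (-(s*u)) * (NormedSpace.exp (u • B)) i j - Pi i j := funext hgeq
    rw [this]
    exact ((Real.continuous_exp.comp ((continuous_const.mul continuous_id).neg)).mul
      (cont_entry' d B i j)).sub continuous_const
  have hEnorm : ∀ x : ℝ, ‖E x‖ = 1 := by
    intro x
    rw [hEdef]
    rw [Complex.norm_exp]
    simp
  -- key identity
  have key : ∀ t : ℝ,
      Complex.exp (-((s : ℂ) * t)) *
          ∫ u in (0:ℝ)..t,
            Complex.exp (2 * lam * ((t : ℂ) - (u : ℂ))) * ((NormedSpace.exp (u • B)) i j : ℂ)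
      = (∫ u in (0:ℝ)..t, E (t-u) * (g u : ℂ))
        + ((Pi i j : ℂ) * ∫ u in (0:ℝ)..t, E (t-u)) := by
    intro t
    have hint1 : IntervalIntegrable (fun u => E (t-u) * (g u : ℂ)) volume 0 t := by
      apply Continuous.intervalIntegrable
      exact (hEcont.comp (continuous_const.sub continuous_id)).mul
        (Complex.continuous_ofReal.comp hgcont)
    have hint2 : IntervalIntegrable (fun u => (Pi i j : ℂ) * E (t-u)) volume 0 t := by
      apply Continuous.intervalIntegrable
      exact continuous_const.mul (hEcont.comp (continuous_const.sub continuous_id))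
    rw [← intervalIntegral.integral_const_mul ((Pi i j : ℂ))]
    rw [← intervalIntegral.integral_add hint1 hint2]
    rw [← intervalIntegral.integral_const_mul]
    apply intervalIntegral.integral_congr
    intro u _
    have h1 : ((g u : ℝ) : ℂ) + (Pi i j : ℂ)
        = ((Real.exp (-(s*u)) : ℝ) : ℂ) * ((NormedSpace.exp (u • B)) i j : ℂ) := by
      rw [hgeq u]; push_cast; ring
    have h2 : Complex.exp (-((s:ℂ)*t)) * Complex.exp (2*lam*((t:ℂ)-(u:ℂ)))
        = E (t-u) * ((Real.exp (-(s*u)) : ℝ) : ℂ) := by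
      rw [hEdef]
      simp only [Complex.ofReal_exp]
      rw [← Complex.exp_add, ← Complex.exp_add, hlam]
      congr 1
      push_cast
      ring
    calc Complex.exp (-((s:ℂ)*t)) *
          (Complex.exp (2*lam*((t:ℂ)-(u:ℂ))) * ((NormedSpace.exp (u • B)) i j : ℂ))
        = (Complex.exp (-((s:ℂ)*t)) * Complex.exp (2*lam*((t:ℂ)-(u:ℂ))))
            * ((NormedSpace.exp (u • B)) i j : ℂ) := by ring
      _ = (E (t-u) * ((Real.exp (-(s*u)) : ℝ) : ℂ)) * ((NormedSpace.exp (u • B)) i j : ℂ) := by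
          rw [h2]
      _ = E (t-u) * (((Real.exp (-(s*u)) : ℝ) : ℂ) * ((NormedSpace.exp (u • B)) i j : ℂ)) := by
          ring
      _ = E (t-u) * (((g u : ℝ) : ℂ) + (Pi i j : ℂ)) := by rw [← h1]
      _ = E (t-u) * ((g u : ℝ) : ℂ) + (Pi i j : ℂ) * E (t-u) := by ring
  -- bound 1
  have hb1 : ∀ t : ℝ, 0 ≤ t → ‖∫ u in (0:ℝ)..t, E (t-u) * (g u : ℂ)‖ ≤ C₁/C₂ := by
    intro t ht
    have hle : ‖∫ u in (0:ℝ)..t, E (t-u) * (g u : ℂ)‖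
        ≤ |∫ u in (0:ℝ)..t, C₁ * Real.exp (-(C₂*u))| := by
      refine intervalIntegral.norm_integral_le_abs_of_norm_le ?_ ?_
      · filter_upwards [ae_restrict_mem measurableSet_uIoc] with u hu
        rw [Set.uIoc_of_le ht] at hu
        have hu0 : (0:ℝ) ≤ u := le_of_lt hu.1
        rw [norm_mul, hEnorm, one_mul]
        have hnorm : ‖((g u : ℝ) : ℂ)‖ = |g u| := by
          rw [Complex.norm_real, Real.norm_eq_abs]
        rw [hnorm]
        exact (entry_le' d _ i j).trans (hdec u hu0)
      · exact (continuous_const.mul (Real.continuous_exp.comp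
          ((continuous_const.mul continuous_id).neg))).intervalIntegrable 0 t
    refine hle.trans ?_
    have hcomp : ∫ u in (0:ℝ)..t, C₁ * Real.exp (-(C₂*u))
        = C₁ * ((1 - Real.exp (-(C₂*t)))/C₂) := by
      rw [intervalIntegral.integral_const_mul]
      congr 1
      have h1 : ∀ u : ℝ, -(C₂*u) = -C₂ * u := fun u => by ring
      simp only [h1]
      rw [intervalIntegral.integral_comp_mul_left Real.exp (by linarith : -C₂ ≠ 0)]
      rw [integral_exp]
      rw [mul_zero, Real.exp_zero, smul_eq_mul]
      field_simp [hC₂.ne']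
      ring
    rw [hcomp]
    have hexp1 : Real.exp (-(C₂*t)) ≤ 1 := by
      rw [Real.exp_le_one_iff]
      nlinarith
    have hnonneg : 0 ≤ C₁ * ((1 - Real.exp (-(C₂*t)))/C₂) := by
      apply mul_nonneg hC₁.le
      apply div_nonneg _ hC₂.le
      linarith
    rw [abs_of_nonneg hnonneg]
    calc C₁ * ((1 - Real.exp (-(C₂*t)))/C₂) ≤ C₁ * (1/C₂) := by
          apply mul_le_mul_of_nonneg_left _ hC₁.le
          gcongr
          linarith [Real.exp_pos (-(C₂*t))]
      _ = C₁/C₂ := by ring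
  -- bound 2
  have hb2 : ∀ t : ℝ, ‖∫ u in (0:ℝ)..t, E (t-u)‖ ≤ 1/|θ| := by
    intro t
    have hc0 : ((2*θ:ℝ):ℂ) * Complex.I ≠ 0 := by
      apply mul_ne_zero _ Complex.I_ne_zero
      exact_mod_cast (by simpa using mul_ne_zero two_ne_zero hθ0 : (2*θ : ℝ) ≠ 0)
    have harg : ∀ x : ℝ, ((2*θ*x : ℝ):ℂ) * Complex.I = (((2*θ:ℝ):ℂ) * Complex.I) * x := by
      intro x
      push_cast
      ring
    have hE' : ∀ x : ℝ, E x = Complex.exp ((((2*θ:ℝ):ℂ) * Complex.I) * x) := by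
      intro x
      rw [hEdef]
      exact congrArg Complex.exp (harg x)
    have hcomp : (∫ u in (0:ℝ)..t, E (t-u)) = ∫ x in (0:ℝ)..t, E x := by
      have h := intervalIntegral.integral_comp_sub_left (a := 0) (b := t) E t
      rw [sub_self, sub_zero] at h
      exact h
    rw [hcomp]
    have : (∫ x in (0:ℝ)..t, E x)
        = ∫ x in (0:ℝ)..t, Complex.exp ((((2*θ:ℝ):ℂ) * Complex.I) * x) := by
      simp only [hE']
    rw [this, integral_exp_mul_complex hc0]
    rw [norm_div]
    have hnum : ‖Complex.exp ((((2*θ:ℝ):ℂ) * Complex.I) * t)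
        - Complex.exp ((((2*θ:ℝ):ℂ) * Complex.I) * 0)‖ ≤ 2 := by
      refine (norm_sub_le _ _).trans ?_
      rw [← hE' t, hEnorm t]
      simp only [Complex.ofReal_zero, mul_zero, Complex.exp_zero, norm_one]
      norm_num
    have hden : ‖((2*θ:ℝ):ℂ) * Complex.I‖ = 2*|θ| := by
      rw [norm_mul, Complex.norm_real, Complex.norm_I, mul_one,
        Real.norm_eq_abs, abs_mul]
      norm_num
    rw [hden]
    calc ‖Complex.exp ((((2*θ:ℝ):ℂ) * Complex.I) * t)
          - Complex.exp ((((2*θ:ℝ):ℂ) * Complex.I) * 0)‖ / (2*|θ|)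
        ≤ 2 / (2*|θ|) := by gcongr
      _ = 1/|θ| := by
          rw [div_eq_div_iff (by positivity) (abs_ne_zero.mpr hθ0)]
          ring
  -- finish
  set M : ℝ := C₁/C₂ + |Pi i j| * (1/|θ|) with hMdef
  have hbound : ∀ t : ℝ, 0 ≤ t →
      ‖Complex.exp (-((s : ℂ) * t)) *
        ∫ u in (0:ℝ)..t,
          Complex.exp (2 * lam * ((t : ℂ) - (u : ℂ))) * ((NormedSpace.exp (u • B)) i j : ℂ)‖
      ≤ M := by
    intro t ht
    rw [key t]
    refine (norm_add_le _ _).trans ?_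
    apply add_le_add (hb1 t ht)
    rw [norm_mul]
    have : ‖((Pi i j : ℝ) : ℂ)‖ = |Pi i j| := by rw [Complex.norm_real, Real.norm_eq_abs]
    rw [this]
    exact mul_le_mul_of_nonneg_left (hb2 t) (abs_nonneg _)
  have htend : Tendsto (fun t : ℝ => M * t⁻¹) atTop (nhds 0) := by
    simpa using tendsto_inv_atTop_zero.const_mul M
  refine squeeze_zero_norm' ?_ htend
  · filter_upwards [eventually_ge_atTop (1:ℝ)] with t ht
    have ht0 : (0:ℝ) < t := lt_of_lt_of_le one_pos ht
    rw [norm_mul]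
    have h1 : ‖((t:ℝ):ℂ)⁻¹‖ = t⁻¹ := by
      rw [norm_inv, Complex.norm_real, Real.norm_eq_abs, abs_of_pos ht0]
    rw [h1, mul_comm]
    exact mul_le_mul_of_nonneg_right (hbound t ht0.le) (inv_nonneg.mpr ht0.le)
end

section
/- Let d ∈ ℕ, B ∈ ℝ^{d×d}, s ∈ ℝ with s > 0, Π ∈ ℝ^{d×d}, and suppose there exist constants C₁, C₂ ∈ (0,∞) such that ‖e^{−su}e^{uB} − Π‖ ≤ C₁e^{−C₂u} for all u ≥ 0, where e^{uB} is the matrix exponential. Let λ ∈ ℂ with λ ≠ 0 and 2Re(λ) < s. Then, viewing matrices as complex matrices, e^{−st}∫_0^t e^{2λ(t−u)} (∫_0^u e^{wB} dw) du → Π/((s−2λ)s) as t → ∞ (entrywise convergence in ℂ^{d×d}). -/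
open MeasureTheory Filter

namespace Stmt18Helper

lemma rexp_neg_tendsto {r : ℝ} (hr : 0 < r) :
    Tendsto (fun t : ℝ => Real.exp (-(r * t))) atTop (nhds 0) := by
  apply Real.tendsto_exp_atBot.comp
  have h1 : Tendsto (fun t : ℝ => r * t) atTop atTop :=
    Tendsto.const_mul_atTop hr tendsto_id
  exact tendsto_neg_atTop_atBot.comp h1

lemma cexp_neg_tendsto {a : ℂ} (ha : 0 < a.re) :
    Tendsto (fun t : ℝ => Complex.exp (-(a * t))) atTop (nhds 0) := by
  rw [tendsto_zero_iff_norm_tendsto_zero]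
  have hnorm : ∀ t : ℝ, ‖Complex.exp (-(a * t))‖ = Real.exp (-(a.re * t)) := by
    intro t
    rw [Complex.norm_exp]
    congr 1
    simp [Complex.mul_re]
  simp only [hnorm]
  exact rexp_neg_tendsto ha

/-- Key abstract lemma: if `Re a > 0` and `g → L`, then
`e^{-at} ∫_0^t e^{au} g(u) du → L / a`. -/
lemma key {a : ℂ} (ha : 0 < a.re) {g : ℝ → ℂ} (hg : Continuous g) {L : ℂ}
    (hL : Tendsto g atTop (nhds L)) :
    Tendsto (fun t : ℝ => Complex.exp (-(a * t)) * ∫ u in (0:ℝ)..t, Complex.exp (a * u) * g u)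
      atTop (nhds (L / a)) := by
  have ha0 : a ≠ 0 := fun h => by simp [h] at ha
  set r := a.re with hr
  have hcont : Continuous fun u : ℝ => Complex.exp (a * u) :=
    Complex.continuous_exp.comp (continuous_const.mul Complex.continuous_ofReal)
  have hint : ∀ T t : ℝ, IntervalIntegrable (fun u : ℝ => Complex.exp (a*u) * (g u - L))
      volume T t := fun T t => ((hcont.mul (hg.sub continuous_const)).intervalIntegrable T t)
  have hrcont : Continuous fun u : ℝ => Real.exp (r*u) * ‖g u - L‖ :=
    (Real.continuous_exp.comp (continuous_const.mul continuous_id)).mul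
      ((hg.sub continuous_const).norm)
  have hint2 : ∀ T t : ℝ, IntervalIntegrable (fun u : ℝ => Real.exp (r*u) * ‖g u - L‖)
      volume T t := fun T t => hrcont.intervalIntegrable T t
  -- decomposition
  have hdecomp : ∀ t : ℝ,
      Complex.exp (-(a*t)) * ∫ u in (0:ℝ)..t, Complex.exp (a*u) * g u
        = L * (1 - Complex.exp (-(a*t))) / a
          + Complex.exp (-(a*t)) * ∫ u in (0:ℝ)..t, Complex.exp (a*u) * (g u - L) := by
    intro t
    have e1 : (∫ u in (0:ℝ)..t, Complex.exp (a*u) * g u)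
        = (∫ u in (0:ℝ)..t, Complex.exp (a*u) * (g u - L))
          + (∫ u in (0:ℝ)..t, Complex.exp (a*u) * L) := by
      rw [← intervalIntegral.integral_add (g := fun u : ℝ => Complex.exp (a*u) * L) (hint 0 t)
        ((hcont.mul continuous_const).intervalIntegrable 0 t)]
      apply intervalIntegral.integral_congr
      intro u _
      ring
    have e2 : (∫ u in (0:ℝ)..t, Complex.exp (a*u) * L)
        = (Complex.exp (a*t) - 1) / a * L := by
      rw [intervalIntegral.integral_mul_const, integral_exp_mul_complex ha0]
      norm_num
    have hexp : Complex.exp (-(a*t)) * Complex.exp (a*t) = 1 := by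
      rw [← Complex.exp_add]
      ring_nf
      exact Complex.exp_zero
    rw [e1, e2]
    calc Complex.exp (-(a*t)) *
          ((∫ u in (0:ℝ)..t, Complex.exp (a*u) * (g u - L)) + (Complex.exp (a*t) - 1) / a * L)
        = (Complex.exp (-(a*t)) * Complex.exp (a*t) - Complex.exp (-(a*t))) / a * L
            + Complex.exp (-(a*t)) * ∫ u in (0:ℝ)..t, Complex.exp (a*u) * (g u - L) := by
          ring
      _ = L * (1 - Complex.exp (-(a*t))) / a
            + Complex.exp (-(a*t)) * ∫ u in (0:ℝ)..t, Complex.exp (a*u) * (g u - L) := by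
          rw [hexp]; ring
  -- first piece
  have h1 : Tendsto (fun t : ℝ => L * (1 - Complex.exp (-(a*t))) / a) atTop (nhds (L / a)) := by
    have h0 := cexp_neg_tendsto ha
    have hone : Tendsto (fun _ : ℝ => (1:ℂ)) atTop (nhds 1) := tendsto_const_nhds
    have := ((hone.sub h0).const_mul L).div_const a
    simpa using this
  -- second piece
  have h2 : Tendsto (fun t : ℝ =>
      Complex.exp (-(a*t)) * ∫ u in (0:ℝ)..t, Complex.exp (a*u) * (g u - L)) atTop (nhds 0) := by
    rw [Metric.tendsto_nhds]
    intro ε hε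
    have hrpos : 0 < r := ha
    have hrε : (0:ℝ) < ε * r / 2 := by positivity
    have hgL : Tendsto (fun u => ‖g u - L‖) atTop (nhds 0) := by
      have h' : Tendsto (fun u => g u - L) atTop (nhds (L - L)) := hL.sub_const L
      rw [sub_self] at h'
      exact tendsto_zero_iff_norm_tendsto_zero.mp h'
    obtain ⟨T₀, hT₀⟩ := eventually_atTop.mp (hgL.eventually_le_const hrε)
    set T := max T₀ 0 with hTdef
    have hTnn : (0:ℝ) ≤ T := le_max_right _ _
    have hTbound : ∀ u, T ≤ u → ‖g u - L‖ ≤ ε * r / 2 :=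
      fun u hu => hT₀ u (le_trans (le_max_left _ _) hu)
    set K := ∫ u in (0:ℝ)..T, Real.exp (r*u) * ‖g u - L‖ with hK
    have hKlim : Tendsto (fun t : ℝ => Real.exp (-(r*t)) * K) atTop (nhds 0) := by
      simpa using (rexp_neg_tendsto hrpos).mul_const K
    have hev2 : ∀ᶠ t in atTop, Real.exp (-(r*t)) * K < ε/2 :=
      hKlim.eventually_lt_const (by positivity)
    filter_upwards [hev2, eventually_ge_atTop T] with t ht2 htT
    rw [dist_zero_right]
    have htnn : (0:ℝ) ≤ t := le_trans hTnn htT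
    have hnorm1 : ‖Complex.exp (-(a*t))‖ = Real.exp (-(r*t)) := by
      rw [Complex.norm_exp]
      congr 1
      simp [Complex.mul_re, hr]
    have hnormint : ∀ u : ℝ, ‖Complex.exp (a*u) * (g u - L)‖ = Real.exp (r*u) * ‖g u - L‖ := by
      intro u
      rw [norm_mul, Complex.norm_exp]
      congr 2
      simp [Complex.mul_re, hr]
    have step1 : ‖∫ u in (0:ℝ)..t, Complex.exp (a*u) * (g u - L)‖
        ≤ ∫ u in (0:ℝ)..t, Real.exp (r*u) * ‖g u - L‖ := by
      calc ‖∫ u in (0:ℝ)..t, Complex.exp (a*u) * (g u - L)‖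
          ≤ ∫ u in (0:ℝ)..t, ‖Complex.exp (a*u) * (g u - L)‖ :=
            intervalIntegral.norm_integral_le_integral_norm htnn
        _ = ∫ u in (0:ℝ)..t, Real.exp (r*u) * ‖g u - L‖ := by
            apply intervalIntegral.integral_congr
            intro u _
            exact hnormint u
    have hsplit : (∫ u in (0:ℝ)..t, Real.exp (r*u) * ‖g u - L‖)
        = K + ∫ u in T..t, Real.exp (r*u) * ‖g u - L‖ := by
      rw [hK, intervalIntegral.integral_add_adjacent_intervals (hint2 0 T) (hint2 T t)]
    have htail : (∫ u in T..t, Real.exp (r*u) * ‖g u - L‖) ≤ ε/2 * Real.exp (r*t) := by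
      have b1 : (∫ u in T..t, Real.exp (r*u) * ‖g u - L‖)
          ≤ ∫ u in T..t, Real.exp (r*u) * (ε * r / 2) := by
        apply intervalIntegral.integral_mono_on htT (hint2 T t)
          (((Real.continuous_exp.comp (continuous_const.mul continuous_id)).mul
            continuous_const).intervalIntegrable T t)
        intro u hu
        exact mul_le_mul_of_nonneg_left (hTbound u hu.1) (Real.exp_nonneg _)
      have b2 : (∫ u in T..t, Real.exp (r*u) * (ε * r / 2))
          = (∫ u in T..t, Real.exp (r*u)) * (ε * r / 2) :=
        intervalIntegral.integral_mul_const _ _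
      have b3 : (∫ u in T..t, Real.exp (r*u)) = (Real.exp (r*t) - Real.exp (r*T)) / r := by
        rw [intervalIntegral.integral_comp_mul_left (fun x => Real.exp x) (ne_of_gt hrpos),
          integral_exp]
        rw [smul_eq_mul]
        field_simp
      have hexpT : (0:ℝ) < Real.exp (r*T) := Real.exp_pos _
      calc (∫ u in T..t, Real.exp (r*u) * ‖g u - L‖)
          ≤ (∫ u in T..t, Real.exp (r*u)) * (ε * r / 2) := le_of_le_of_eq b1 b2
        _ = (Real.exp (r*t) - Real.exp (r*T)) / r * (ε * r / 2) := by rw [b3]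
        _ = ε/2 * (Real.exp (r*t) - Real.exp (r*T)) := by
            field_simp
        _ ≤ ε/2 * Real.exp (r*t) := by nlinarith [le_of_lt hε]
    have hexpinv : Real.exp (-(r*t)) * Real.exp (r*t) = 1 := by
      rw [← Real.exp_add]; ring_nf; exact Real.exp_zero
    have hexpnn : (0:ℝ) ≤ Real.exp (-(r*t)) := Real.exp_nonneg _
    calc ‖Complex.exp (-(a*t)) * ∫ u in (0:ℝ)..t, Complex.exp (a*u) * (g u - L)‖
        = Real.exp (-(r*t)) * ‖∫ u in (0:ℝ)..t, Complex.exp (a*u) * (g u - L)‖ := by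
          rw [norm_mul, hnorm1]
      _ ≤ Real.exp (-(r*t)) * (K + ∫ u in T..t, Real.exp (r*u) * ‖g u - L‖) := by
          apply mul_le_mul_of_nonneg_left _ hexpnn
          rw [← hsplit]
          exact step1
      _ ≤ Real.exp (-(r*t)) * K + Real.exp (-(r*t)) * (ε/2 * Real.exp (r*t)) := by
          rw [mul_add]
          exact add_le_add le_rfl (mul_le_mul_of_nonneg_left htail hexpnn)
      _ = Real.exp (-(r*t)) * K + ε/2 * (Real.exp (-(r*t)) * Real.exp (r*t)) := by ring
      _ = Real.exp (-(r*t)) * K + ε/2 := by rw [hexpinv]; ring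
      _ < ε/2 + ε/2 := by linarith
      _ = ε := by ring
  have hcomb := h1.add h2
  rw [add_zero] at hcomb
  exact Tendsto.congr (fun t => (hdecomp t).symm) hcomb

lemma entry_abs_le {d : ℕ} (M : Matrix (Fin d) (Fin d) ℝ) (i j : Fin d) :
    |M i j| ≤ ‖Matrix.toEuclideanCLM (𝕜 := ℝ) M‖ := by
  classical
  set x : EuclideanSpace ℝ (Fin d) := (WithLp.equiv 2 (Fin d → ℝ)).symm (Pi.single j 1) with hx
  have hxnorm : ‖x‖ = 1 := by
    have hxe : x = EuclideanSpace.single j (1:ℝ) := rfl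
    rw [hxe, EuclideanSpace.norm_single]
    norm_num
  have hMij : (Matrix.toEuclideanCLM (𝕜 := ℝ) M x) i = M i j := by
    rw [hx, WithLp.equiv_symm_apply, Matrix.toEuclideanCLM_toLp]
    show (Matrix.toLin' M (Pi.single j 1)) i = M i j
    rw [Matrix.toLin'_apply, Matrix.mulVec_single]
    simp
  have coord : ∀ v : EuclideanSpace ℝ (Fin d), |v i| ≤ ‖v‖ := by
    intro v
    have h := abs_real_inner_le_norm (EuclideanSpace.single i (1:ℝ)) v
    rw [EuclideanSpace.norm_single] at h
    have hinner : (inner ℝ (EuclideanSpace.single i (1:ℝ)) v : ℝ) = v i := by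
      rw [EuclideanSpace.inner_single_left]
      simp
    rw [hinner] at h
    simpa using h
  calc |M i j| = |(Matrix.toEuclideanCLM (𝕜 := ℝ) M x) i| := by rw [hMij]
    _ ≤ ‖Matrix.toEuclideanCLM (𝕜 := ℝ) M x‖ := coord _
    _ ≤ ‖Matrix.toEuclideanCLM (𝕜 := ℝ) M‖ * ‖x‖ :=
        (Matrix.toEuclideanCLM (𝕜 := ℝ) M).le_opNorm x
    _ = ‖Matrix.toEuclideanCLM (𝕜 := ℝ) M‖ := by rw [hxnorm, mul_one]

lemma exp_matrix_continuous {d : ℕ} (B : Matrix (Fin d) (Fin d) ℝ) :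
    Continuous fun w : ℝ => NormedSpace.exp (w • B) := by
  letI : SeminormedRing (Matrix (Fin d) (Fin d) ℝ) := Matrix.linftyOpSemiNormedRing
  letI : NormedRing (Matrix (Fin d) (Fin d) ℝ) := Matrix.linftyOpNormedRing
  letI : NormedAlgebra ℝ (Matrix (Fin d) (Fin d) ℝ) := Matrix.linftyOpNormedAlgebra
  letI : NormedAlgebra ℚ (Matrix (Fin d) (Fin d) ℝ) := Matrix.linftyOpNormedAlgebra
  exact NormedSpace.exp_continuous.comp (continuous_id.smul continuous_const)

lemma exp_entry_continuous {d : ℕ} (B : Matrix (Fin d) (Fin d) ℝ) (i j : Fin d) :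
    Continuous fun w : ℝ => (NormedSpace.exp (w • B)) i j := by
  have h := exp_matrix_continuous B
  exact (continuous_apply j).comp ((continuous_apply i).comp h)

end Stmt18Helper

open Stmt18Helper

/-- Let `B ∈ ℝ^{d×d}`, `s > 0`, `Π ∈ ℝ^{d×d}`, and suppose
`‖e^{-su} e^{uB} - Π‖ ≤ C₁ e^{-C₂ u}` for all `u ≥ 0` (operator norm induced by the Euclidean
norm), for some `C₁, C₂ > 0`. If `λ ∈ ℂ` with `λ ≠ 0` and `2 Re λ < s`, then
`e^{-st} ∫_0^t e^{2λ(t-u)} (∫_0^u e^{wB} dw) du → Π/((s-2λ)s)` as `t → ∞`, entrywise in `ℂ`. -/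
theorem stmt18 (d : ℕ) (B : Matrix (Fin d) (Fin d) ℝ) (s : ℝ) (hs : 0 < s)
    (Pi : Matrix (Fin d) (Fin d) ℝ)
    (hdecay : ∃ C₁ C₂ : ℝ, 0 < C₁ ∧ 0 < C₂ ∧ ∀ u : ℝ, 0 ≤ u →
      ‖Matrix.toEuclideanCLM (𝕜 := ℝ)
          (Real.exp (-(s * u)) • NormedSpace.exp (u • B) - Pi)‖ ≤ C₁ * Real.exp (-(C₂ * u)))
    (lam : ℂ) (hlam0 : lam ≠ 0) (hlam : 2 * lam.re < s) :
    ∀ i j : Fin d,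
      Tendsto
        (fun t : ℝ => Complex.exp (-((s : ℂ) * t)) *
          ∫ u in (0:ℝ)..t,
            Complex.exp (2 * lam * ((t : ℂ) - (u : ℂ))) *
              ((∫ w in (0:ℝ)..u, (NormedSpace.exp (w • B)) i j : ℝ) : ℂ))
        atTop (nhds ((Pi i j : ℂ) / (((s : ℂ) - 2 * lam) * (s : ℂ)))) := by
  obtain ⟨C₁, C₂, hC₁, hC₂, hbound⟩ := hdecay
  intro i j
  -- the renormalized entry
  set g : ℝ → ℝ := fun w => Real.exp (-(s*w)) * (NormedSpace.exp (w • B)) i j with hgdef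
  have hgcont : Continuous g :=
    (Real.continuous_exp.comp (continuous_const.mul continuous_id).neg).mul
      (exp_entry_continuous B i j)
  have hgL : Tendsto g atTop (nhds (Pi i j)) := by
    rw [← tendsto_sub_nhds_zero_iff]
    apply squeeze_zero_norm' (a := fun w => C₁ * Real.exp (-(C₂ * w)))
    · filter_upwards [eventually_ge_atTop (0:ℝ)] with w hw
      have hentry : g w - Pi i j
          = (Real.exp (-(s*w)) • NormedSpace.exp (w • B) - Pi) i j := by
        simp [hgdef, Matrix.sub_apply, Matrix.smul_apply, smul_eq_mul]
      rw [Real.norm_eq_abs, hentry]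
      exact le_trans (entry_abs_le _ i j) (hbound w hw)
    · simpa using (rexp_neg_tendsto hC₂).const_mul C₁
  -- complexified g
  set G : ℝ → ℂ := fun w => ((g w : ℝ) : ℂ) with hGdef
  have hGcont : Continuous G := Complex.continuous_ofReal.comp hgcont
  have hGL : Tendsto G atTop (nhds ((Pi i j : ℝ) : ℂ)) :=
    (Complex.continuous_ofReal.tendsto _).comp hgL
  have hsre : (0:ℝ) < ((s:ℂ)).re := by simpa using hs
  -- first application of key
  have hH := key hsre hGcont hGL
  -- identify the inner integral
  have hinner : ∀ u : ℝ, (∫ w in (0:ℝ)..u, Complex.exp ((s:ℂ)*w) * G w)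
      = ((∫ w in (0:ℝ)..u, (NormedSpace.exp (w • B)) i j : ℝ) : ℂ) := by
    intro u
    rw [← intervalIntegral.integral_ofReal]
    apply intervalIntegral.integral_congr
    intro w _
    show Complex.exp ((s:ℂ)*w) * ((g w : ℝ) : ℂ) = (((NormedSpace.exp (w • B)) i j : ℝ) : ℂ)
    rw [hgdef]
    push_cast
    rw [← mul_assoc, ← Complex.exp_add]
    simp
  -- H = e^{-su} * inner integral
  set H : ℝ → ℂ := fun u => Complex.exp (-((s:ℂ)*u)) *
    ((∫ w in (0:ℝ)..u, (NormedSpace.exp (w • B)) i j : ℝ) : ℂ) with hHdef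
  have hHlim : Tendsto H atTop (nhds (((Pi i j : ℝ) : ℂ) / (s:ℂ))) := by
    apply Tendsto.congr _ hH
    intro u
    rw [hHdef, hinner u]
  have hHcont : Continuous H := by
    apply Continuous.mul
    · exact Complex.continuous_exp.comp (continuous_const.mul Complex.continuous_ofReal).neg
    · apply Complex.continuous_ofReal.comp
      apply intervalIntegral.continuous_primitive
      exact fun a b => (exp_entry_continuous B i j).intervalIntegrable a b
  -- second application of key
  have hare : (0:ℝ) < ((s:ℂ) - 2*lam).re := by
    have h2 : ((s:ℂ) - 2*lam).re = s - 2*lam.re := by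
      simp [Complex.sub_re, Complex.mul_re]
    rw [h2]
    linarith
  have hfinal := key hare hHcont hHlim
  -- identify functions and limits
  have hlimval : (((Pi i j : ℝ) : ℂ) / (s:ℂ)) / ((s:ℂ) - 2*lam)
      = (Pi i j : ℂ) / (((s : ℂ) - 2 * lam) * (s : ℂ)) := by
    rw [div_div, mul_comm]
  rw [hlimval] at hfinal
  apply Tendsto.congr _ hfinal
  intro t
  set a : ℂ := (s:ℂ) - 2*lam with hadef
  have hsplit : Complex.exp (-(a * t)) = Complex.exp (-((s:ℂ)*t)) * Complex.exp (2*lam*t) := by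
    rw [← Complex.exp_add]
    congr 1
    rw [hadef]
    ring
  have hmain : (∫ u in (0:ℝ)..t, Complex.exp (a * u) * H u)
      = ∫ u in (0:ℝ)..t, Complex.exp (-(2*lam*u)) *
          ((∫ w in (0:ℝ)..u, (NormedSpace.exp (w • B)) i j : ℝ) : ℂ) := by
    apply intervalIntegral.integral_congr
    intro u _
    rw [hHdef]
    show Complex.exp (a * u) * (Complex.exp (-((s:ℂ)*u)) * _) = _
    rw [← mul_assoc, ← Complex.exp_add]
    congr 2
    rw [hadef]
    ring
  rw [hsplit, hmain, mul_assoc]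
  congr 1
  rw [← intervalIntegral.integral_const_mul]
  apply intervalIntegral.integral_congr
  intro u _
  beta_reduce
  rw [← mul_assoc, ← Complex.exp_add]
  congr 2
  ring
end
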